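/- For every natural number n ≥ 0, over the theory DB₀ the schema Coll_s(Σ_{n+1}) is deductively equivalent to the union of the schemas Coll(Σ_{n+1}) and Sep(Σ_{n+1}): every model of DB₀ satisfies all instances of Coll_s(Σ_{n+1}) if and only if it satisfies all instances of Coll(Σ_{n+1}) and all instances of Sep(Σ_{n+1}). -/

import Mathlib

/- A deep embedding of the first-order language of set theory L_∈ = {∈, =},
   with named variables indexed by ℕ. -/

namespace FOSet

/-- Formulas of L_∈ with variables indexed by ℕ. -/
inductive Fml : Type
  | mem : ℕ → ℕ → Fml
  | eq  : ℕ → ℕ → Fml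
  | not : Fml → Fml
  | and : Fml → Fml → Fml
  | or  : Fml → Fml → Fml
  | imp : Fml → Fml → Fml
  | all : ℕ → Fml → Fml
  | ex  : ℕ → Fml → Fml

namespace Fml

/-- Free variables of a formula. -/
def fv : Fml → Set ℕ
  | mem i j => {i, j}
  | eq i j  => {i, j}
  | not φ   => φ.fv
  | and φ ψ => φ.fv ∪ ψ.fv
  | or φ ψ  => φ.fv ∪ ψ.fv
  | imp φ ψ => φ.fv ∪ ψ.fv
  | all i φ => φ.fv \ {i}
  | ex i φ  => φ.fv \ {i}

end Fml

/-- Satisfaction, in the substructure of `(N, E)` with domain `S`, of a formula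
under a valuation `v` : quantifiers range over `S`. -/
def SatIn {N : Type} (E : N → N → Prop) (S : Set N) : (ℕ → N) → Fml → Prop
  | v, .mem i j => E (v i) (v j)
  | v, .eq i j  => v i = v j
  | v, .not φ   => ¬ SatIn E S v φ
  | v, .and φ ψ => SatIn E S v φ ∧ SatIn E S v ψ
  | v, .or φ ψ  => SatIn E S v φ ∨ SatIn E S v ψ
  | v, .imp φ ψ => SatIn E S v φ → SatIn E S v ψ
  | v, .all i φ => ∀ a ∈ S, SatIn E S (Function.update v i a) φ
  | v, .ex i φ  => ∃ a ∈ S, SatIn E S (Function.update v i a) φ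

/-- Satisfaction in the full structure `(N, E)`. -/
def Sat {N : Type} (E : N → N → Prop) (v : ℕ → N) (φ : Fml) : Prop :=
  SatIn E Set.univ v φ

/-- Δ₀ (= Σ₀ = Π₀) formulas: every quantifier is bounded, i.e. of the form
`∀ x ∈ y` or `∃ x ∈ y`. -/
inductive IsDelta0 : Fml → Prop
  | mem (i j : ℕ) : IsDelta0 (Fml.mem i j)
  | eq (i j : ℕ)  : IsDelta0 (Fml.eq i j)
  | not {φ} : IsDelta0 φ → IsDelta0 φ.not
  | and {φ ψ} : IsDelta0 φ → IsDelta0 ψ → IsDelta0 (φ.and ψ)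
  | or {φ ψ}  : IsDelta0 φ → IsDelta0 ψ → IsDelta0 (φ.or ψ)
  | imp {φ ψ} : IsDelta0 φ → IsDelta0 ψ → IsDelta0 (φ.imp ψ)
  | ball {i j : ℕ} {φ} : i ≠ j → IsDelta0 φ →
      IsDelta0 (Fml.all i ((Fml.mem i j).imp φ))
  | bex {i j : ℕ} {φ} : i ≠ j → IsDelta0 φ →
      IsDelta0 (Fml.ex i ((Fml.mem i j).and φ))

/-- The Lévy hierarchy: `(levels n).1` is the class of Σ_n formulas and
`(levels n).2` the class of Π_n formulas. -/
def levels : ℕ → (Fml → Prop) × (Fml → Prop)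
  | 0 => (IsDelta0, IsDelta0)
  | n + 1 =>
      (fun φ => ∃ i ψ, (levels n).2 ψ ∧ φ = Fml.ex i ψ,
       fun φ => ∃ i ψ, (levels n).1 ψ ∧ φ = Fml.all i ψ)

def IsSigma (n : ℕ) : Fml → Prop := (levels n).1

def IsPi (n : ℕ) : Fml → Prop := (levels n).2

variable {M N : Type}

/-- `p` is the (Kuratowski) pair `{a, b}` in the sense of `E`. -/
def IsPairOf (E : M → M → Prop) (p a b : M) : Prop :=
  ∀ w, E w p ↔ (w = a ∨ w = b)

/-- `z` is the ordered pair `(a, b)` (Kuratowski) in the sense of `E`. -/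
def IsOPairOf (E : M → M → Prop) (z a b : M) : Prop :=
  ∃ s t, IsPairOf E s a a ∧ IsPairOf E t a b ∧ IsPairOf E z s t

/-- Valuation sending variable 0 to `x` and every other variable to `y`;
used for formulas φ(x, y) with free variables among {0, 1}. -/
def val2 (x y : M) : ℕ → M := fun k => if k = 0 then x else y

/-- Valuation sending 0 ↦ x, 1 ↦ y, everything else ↦ v;
used for formulas φ(x, y, v) with free variables among {0, 1, 2}. -/
def val3 (x y v : M) : ℕ → M := fun k => if k = 0 then x else if k = 1 then y else v

/-- `M ⊨ Sep(φ)` for φ = φ(x, v) (x is variable 0, v is variable 1):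
∀v∀p∃q∀x(x∈q ↔ x∈p ∧ φ(x,v)). -/
def SepAx (E : M → M → Prop) (φ : Fml) : Prop :=
  ∀ v p : M, ∃ q : M, ∀ x : M, E x q ↔ (E x p ∧ Sat E (val2 x v) φ)

/-- `M ⊨ Sep⁻(φ)` for a parameter-free φ = φ(x) (x is variable 0). -/
def SepMinusAx (E : M → M → Prop) (φ : Fml) : Prop :=
  ∀ p : M, ∃ q : M, ∀ x : M, E x q ↔ (E x p ∧ Sat E (fun _ => x) φ)

/-- `(M, E) ⊨ DB₀`: extensionality, empty set, pairing, union, cartesian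
product, and Δ₀ separation. -/
def SatDB0 (E : M → M → Prop) : Prop :=
  (∀ a b : M, (∀ x, E x a ↔ E x b) → a = b) ∧
  (∃ e : M, ∀ x, ¬ E x e) ∧
  (∀ a b : M, ∃ p, IsPairOf E p a b) ∧
  (∀ a : M, ∃ u, ∀ x, E x u ↔ ∃ y, E y a ∧ E x y) ∧
  (∀ a b : M, ∃ c, ∀ z, E z c ↔ ∃ x y, E x a ∧ E y b ∧ IsOPairOf E z x y) ∧
  (∀ φ, IsDelta0 φ → φ.fv ⊆ {0, 1} → SepAx E φ)

/-- `M ⊨ Coll(φ)` for φ = φ(x, y, v) (x = var 0, y = var 1, v = var 2):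
∀v∀p(∀x∈p ∃y φ → ∃q ∀x∈p ∃y∈q φ). -/
def CollAx (E : M → M → Prop) (φ : Fml) : Prop :=
  ∀ v p : M, (∀ x, E x p → ∃ y, Sat E (val3 x y v) φ) →
    ∃ q, ∀ x, E x p → ∃ y, E y q ∧ Sat E (val3 x y v) φ

/-- `M ⊨ Coll_s(φ)`: ∀v∀p∃q∀x∈p(∃y φ ↔ ∃y∈q φ). -/
def CollSAx (E : M → M → Prop) (φ : Fml) : Prop :=
  ∀ v p : M, ∃ q, ∀ x, E x p →
    ((∃ y, Sat E (val3 x y v) φ) ↔ ∃ y, E y q ∧ Sat E (val3 x y v) φ)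

/-- `M ⊨ Coll_w(φ)`: ∀v(∀x∃y φ → ∀p∃q∀x∈p∃y∈q φ). -/
def CollWAx (E : M → M → Prop) (φ : Fml) : Prop :=
  ∀ v : M, (∀ x, ∃ y, Sat E (val3 x y v) φ) →
    ∀ p, ∃ q, ∀ x, E x p → ∃ y, E y q ∧ Sat E (val3 x y v) φ

/-- `M ⊨ Coll⁻(φ)` for a parameter-free φ = φ(x, y) (x = var 0, y = var 1). -/
def CollMinusAx (E : M → M → Prop) (φ : Fml) : Prop :=
  ∀ p : M, (∀ x, E x p → ∃ y, Sat E (val2 x y) φ) →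
    ∃ q, ∀ x, E x p → ∃ y, E y q ∧ Sat E (val2 x y) φ

/-- `M ⊨ Coll_w⁻(φ)` for a parameter-free φ = φ(x, y). -/
def CollWMinusAx (E : M → M → Prop) (φ : Fml) : Prop :=
  (∀ x : M, ∃ y, Sat E (val2 x y) φ) →
    ∀ p, ∃ q, ∀ x, E x p → ∃ y, E y q ∧ Sat E (val2 x y) φ

/-- `M ⊨ Coll_s⁻(φ)` for a parameter-free φ = φ(x, y). -/
def CollSMinusAx (E : M → M → Prop) (φ : Fml) : Prop :=
  ∀ p : M, ∃ q, ∀ x, E x p →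
    ((∃ y, Sat E (val2 x y) φ) ↔ ∃ y, E y q ∧ Sat E (val2 x y) φ)

/- Schemas over a class Γ of formulas. -/

def CollScheme (E : M → M → Prop) (Γ : Fml → Prop) : Prop :=
  ∀ φ, Γ φ → φ.fv ⊆ {0, 1, 2} → CollAx E φ

def CollSScheme (E : M → M → Prop) (Γ : Fml → Prop) : Prop :=
  ∀ φ, Γ φ → φ.fv ⊆ {0, 1, 2} → CollSAx E φ

def CollWScheme (E : M → M → Prop) (Γ : Fml → Prop) : Prop :=
  ∀ φ, Γ φ → φ.fv ⊆ {0, 1, 2} → CollWAx E φ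

def CollMinusScheme (E : M → M → Prop) (Γ : Fml → Prop) : Prop :=
  ∀ φ, Γ φ → φ.fv ⊆ {0, 1} → CollMinusAx E φ

def CollWMinusScheme (E : M → M → Prop) (Γ : Fml → Prop) : Prop :=
  ∀ φ, Γ φ → φ.fv ⊆ {0, 1} → CollWMinusAx E φ

def CollSMinusScheme (E : M → M → Prop) (Γ : Fml → Prop) : Prop :=
  ∀ φ, Γ φ → φ.fv ⊆ {0, 1} → CollSMinusAx E φ

def SepScheme (E : M → M → Prop) (Γ : Fml → Prop) : Prop :=
  ∀ φ, Γ φ → φ.fv ⊆ {0, 1} → SepAx E φ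

def SepMinusScheme (E : M → M → Prop) (Γ : Fml → Prop) : Prop :=
  ∀ φ, Γ φ → φ.fv ⊆ {0} → SepMinusAx E φ

/- Extensions. We present an extension `M ⊆ N` by an embedding `f : M → N`. -/

/-- `f` embeds `(M, EM)` as a substructure of `(N, EN)`. -/
def SubStr (EM : M → M → Prop) (EN : N → N → Prop) (f : M → N) : Prop :=
  Function.Injective f ∧ ∀ a b : M, EM a b ↔ EN (f a) (f b)

/-- `f : M → N` is a (fully) elementary embedding. -/
def ElemEmb (EM : M → M → Prop) (EN : N → N → Prop) (f : M → N) : Prop :=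
  ∀ (φ : Fml) (v : ℕ → M), Sat EM v φ ↔ Sat EN (f ∘ v) φ

/-- `f : M → N` is a Σ_n-elementary embedding (M ≺_{Σ_n} N). -/
def SigmaElemEmb (n : ℕ) (EM : M → M → Prop) (EN : N → N → Prop) (f : M → N) : Prop :=
  ∀ φ, IsSigma n φ → ∀ v : ℕ → M, Sat EM v φ ↔ Sat EN (f ∘ v) φ

/-- `f : M → N` is a Δ₀-elementary embedding (M ≺_{Δ₀} N). -/
def Delta0ElemEmb (EM : M → M → Prop) (EN : N → N → Prop) (f : M → N) : Prop :=
  ∀ φ, IsDelta0 φ → ∀ v : ℕ → M, Sat EM v φ ↔ Sat EN (f ∘ v) φ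

/-- The convex hull M* of (the image of) M in N:
{a ∈ N : N ⊨ a ∈ m for some m ∈ M}. -/
def hull (EN : N → N → Prop) (f : M → N) : Set N := {a | ∃ m : M, EN a (f m)}

/-- The substructure of `N` with domain `S` is a Σ_n-elementary substructure of
`N` (S ≺_{Σ_n} N). -/
def SigmaElemInTop (n : ℕ) (EN : N → N → Prop) (S : Set N) : Prop :=
  ∀ φ, IsSigma n φ → ∀ v : ℕ → N, (∀ k, v k ∈ S) → (SatIn EN S v φ ↔ Sat EN v φ)

/-- The substructure of `N` with domain `S` is a fully elementary substructure. -/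
def ElemInTop (EN : N → N → Prop) (S : Set N) : Prop :=
  ∀ (φ : Fml) (v : ℕ → N), (∀ k, v k ∈ S) → (SatIn EN S v φ ↔ Sat EN v φ)

/-- `f` is a Σ_n-elementary embedding of `M` into the substructure of `N` with
domain `S` (e.g. M ≺_{Σ_n} M*). -/
def SigmaElemEmbInto (n : ℕ) (EM : M → M → Prop) (EN : N → N → Prop) (f : M → N)
    (S : Set N) : Prop :=
  ∀ φ, IsSigma n φ → ∀ v : ℕ → M, Sat EM v φ ↔ SatIn EN S (f ∘ v) φ

/-- `f` is a fully elementary embedding of `M` into the substructure of `N`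
with domain `S`. -/
def ElemEmbInto (EM : M → M → Prop) (EN : N → N → Prop) (f : M → N) (S : Set N) : Prop :=
  ∀ (φ : Fml) (v : ℕ → M), Sat EM v φ ↔ SatIn EN S (f ∘ v) φ

/-- The extension presented by `f` is an end extension. -/
def IsEndEmb (EN : N → N → Prop) (f : M → N) : Prop :=
  ∀ (m : M) (a : N), EN a (f m) → ∃ m', f m' = a

/-- The extension presented by `f` is cofinal. -/
def Cofinal (EN : N → N → Prop) (f : M → N) : Prop :=
  ∀ a : N, ∃ m : M, EN a (f m)

/-- `a` is a transitive set in the sense of `(N, EN)`. -/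
def TransIn (EN : N → N → Prop) (a : N) : Prop :=
  ∀ x, EN x a → ∀ y, EN y x → EN y a

/-- The extension presented by `f` is taller. -/
def Taller (EN : N → N → Prop) (f : M → N) : Prop :=
  ∃ a : N, ∀ m : M, EN (f m) a

/-- The extension presented by `f` is taller*. -/
def TallerStar (EN : N → N → Prop) (f : M → N) : Prop :=
  ∃ a : N, (∀ m : M, EN (f m) a) ∧ TransIn EN a

/-- Property end_n: for every elementary extension N of M, M* ≺_{Σ_n} N. -/
def HasEnd (n : ℕ) (EM : M → M → Prop) : Prop :=
  ∀ (N : Type) (EN : N → N → Prop) (f : M → N), ElemEmb EM EN f →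
    SigmaElemInTop n EN (hull EN f)

/-- Property cof_n: for every elementary extension N of M, M ≺_{Σ_n} M*. -/
def HasCof (n : ℕ) (EM : M → M → Prop) : Prop :=
  ∀ (N : Type) (EN : N → N → Prop) (f : M → N), ElemEmb EM EN f →
    SigmaElemEmbInto n EM EN f (hull EN f)

/-- Property COF_n: for every Δ₀-elementary cofinal extension N of M with
N ⊨ DB₀, M ≺_{Σ_n} N. -/
def HasCOF (n : ℕ) (EM : M → M → Prop) : Prop :=
  ∀ (N : Type) (EN : N → N → Prop) (f : M → N), SatDB0 EN →
    Delta0ElemEmb EM EN f → Cofinal EN f → SigmaElemEmb n EM EN f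

/-- TCo: every set is an element of some transitive set. -/
def SatTCo (E : M → M → Prop) : Prop :=
  ∀ a : M, ∃ t, E a t ∧ TransIn E t

/-- `a` is an ordinal in the sense of `(M, E)`: a transitive set linearly
ordered by `E`. -/
def OrdIn (E : M → M → Prop) (a : M) : Prop :=
  TransIn E a ∧ ∀ x y, E x a → E y a → (E x y ∨ x = y ∨ E y x)

/-- The formula φ(p, α, v) (p = var 0, α = var 1, v = var 2), with parameter
`v ∈ M`, defines a resolution on `(M, E)`. -/
def IsResolution (E : M → M → Prop) (φ : Fml) (v : M) : Prop :=
  φ.fv ⊆ {0, 1, 2} ∧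
  (∀ α, OrdIn E α → ∃! p, Sat E (val3 p α v) φ) ∧
  (∀ α β p q, E α β → Sat E (val3 p α v) φ → Sat E (val3 q β v) φ →
    ∀ x, E x p → E x q) ∧
  (∀ x, ∃ α, OrdIn E α ∧ ∀ p, Sat E (val3 p α v) φ → E x p)

end FOSet

namespace FOSet

open Function Set

namespace Fml

@[simp] lemma fv_mem (i j : ℕ) : (Fml.mem i j).fv = {i, j} := rfl
@[simp] lemma fv_eq (i j : ℕ) : (Fml.eq i j).fv = {i, j} := rfl
@[simp] lemma fv_not (φ : Fml) : φ.not.fv = φ.fv := rfl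
@[simp] lemma fv_and (φ ψ : Fml) : (φ.and ψ).fv = φ.fv ∪ ψ.fv := rfl
@[simp] lemma fv_or (φ ψ : Fml) : (φ.or ψ).fv = φ.fv ∪ ψ.fv := rfl
@[simp] lemma fv_imp (φ ψ : Fml) : (φ.imp ψ).fv = φ.fv ∪ ψ.fv := rfl
@[simp] lemma fv_all (i : ℕ) (φ : Fml) : (Fml.all i φ).fv = φ.fv \ {i} := rfl
@[simp] lemma fv_ex (i : ℕ) (φ : Fml) : (Fml.ex i φ).fv = φ.fv \ {i} := rfl

lemma fv_finite : ∀ φ : Fml, φ.fv.Finite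
  | .mem i j => (Set.finite_singleton j).insert i
  | .eq i j => (Set.finite_singleton j).insert i
  | .not φ => fv_finite φ
  | .and φ ψ => (fv_finite φ).union (fv_finite ψ)
  | .or φ ψ => (fv_finite φ).union (fv_finite ψ)
  | .imp φ ψ => (fv_finite φ).union (fv_finite ψ)
  | .all _ φ => (fv_finite φ).diff
  | .ex _ φ => (fv_finite φ).diff

/-- fresh variable avoiding a finite set -/
lemma fresh_exists {s : Set ℕ} (hs : s.Finite) : ∃ k, k ∉ s := by
  rcases (hs.infinite_compl).nonempty with ⟨k, hk⟩
  exact ⟨k, hk⟩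

def rename (r : ℕ → ℕ) : Fml → Fml
  | .mem i j => .mem (r i) (r j)
  | .eq i j => .eq (r i) (r j)
  | .not φ => .not (φ.rename r)
  | .and φ ψ => .and (φ.rename r) (ψ.rename r)
  | .or φ ψ => .or (φ.rename r) (ψ.rename r)
  | .imp φ ψ => .imp (φ.rename r) (ψ.rename r)
  | .all i φ => .all (r i) (φ.rename r)
  | .ex i φ => .ex (r i) (φ.rename r)

lemma fv_rename {r : ℕ → ℕ} (hr : Function.Injective r) :
    ∀ φ : Fml, (φ.rename r).fv = r '' φ.fv := by
  intro φ
  induction φ with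
  | mem i j => simp [rename, Set.image_insert_eq]
  | eq i j => simp [rename, Set.image_insert_eq]
  | not φ ih => simpa [rename] using ih
  | and φ ψ ih1 ih2 => simp [rename, ih1, ih2, Set.image_union]
  | or φ ψ ih1 ih2 => simp [rename, ih1, ih2, Set.image_union]
  | imp φ ψ ih1 ih2 => simp [rename, ih1, ih2, Set.image_union]
  | all i φ ih => simp [rename, ih, Set.image_diff hr]
  | ex i φ ih => simp [rename, ih, Set.image_diff hr]

end Fml

variable {M : Type} {E : M → M → Prop} {S : Set M}

@[simp] lemma satIn_mem (v : ℕ → M) (i j : ℕ) : SatIn E S v (.mem i j) ↔ E (v i) (v j) := Iff.rfl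
@[simp] lemma satIn_eq (v : ℕ → M) (i j : ℕ) : SatIn E S v (.eq i j) ↔ v i = v j := Iff.rfl
@[simp] lemma satIn_not (v : ℕ → M) (φ : Fml) : SatIn E S v φ.not ↔ ¬ SatIn E S v φ := Iff.rfl
@[simp] lemma satIn_and (v : ℕ → M) (φ ψ : Fml) :
    SatIn E S v (φ.and ψ) ↔ SatIn E S v φ ∧ SatIn E S v ψ := Iff.rfl
@[simp] lemma satIn_or (v : ℕ → M) (φ ψ : Fml) :
    SatIn E S v (φ.or ψ) ↔ SatIn E S v φ ∨ SatIn E S v ψ := Iff.rfl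
@[simp] lemma satIn_imp (v : ℕ → M) (φ ψ : Fml) :
    SatIn E S v (φ.imp ψ) ↔ (SatIn E S v φ → SatIn E S v ψ) := Iff.rfl
@[simp] lemma satIn_all (v : ℕ → M) (i : ℕ) (φ : Fml) :
    SatIn E S v (.all i φ) ↔ ∀ a ∈ S, SatIn E S (Function.update v i a) φ := Iff.rfl
@[simp] lemma satIn_ex (v : ℕ → M) (i : ℕ) (φ : Fml) :
    SatIn E S v (.ex i φ) ↔ ∃ a ∈ S, SatIn E S (Function.update v i a) φ := Iff.rfl

@[simp] lemma sat_mem (v : ℕ → M) (i j : ℕ) : Sat E v (.mem i j) ↔ E (v i) (v j) := Iff.rfl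
@[simp] lemma sat_eq (v : ℕ → M) (i j : ℕ) : Sat E v (.eq i j) ↔ v i = v j := Iff.rfl
@[simp] lemma sat_not (v : ℕ → M) (φ : Fml) : Sat E v φ.not ↔ ¬ Sat E v φ := Iff.rfl
@[simp] lemma sat_and (v : ℕ → M) (φ ψ : Fml) : Sat E v (φ.and ψ) ↔ Sat E v φ ∧ Sat E v ψ := Iff.rfl
@[simp] lemma sat_or (v : ℕ → M) (φ ψ : Fml) : Sat E v (φ.or ψ) ↔ Sat E v φ ∨ Sat E v ψ := Iff.rfl
@[simp] lemma sat_imp (v : ℕ → M) (φ ψ : Fml) : Sat E v (φ.imp ψ) ↔ (Sat E v φ → Sat E v ψ) := Iff.rfl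
@[simp] lemma sat_all (v : ℕ → M) (i : ℕ) (φ : Fml) :
    Sat E v (.all i φ) ↔ ∀ a, Sat E (Function.update v i a) φ := by
  simp [Sat, SatIn]
@[simp] lemma sat_ex (v : ℕ → M) (i : ℕ) (φ : Fml) :
    Sat E v (.ex i φ) ↔ ∃ a, Sat E (Function.update v i a) φ := by
  simp [Sat, SatIn]

lemma sat_agree : ∀ (φ : Fml) (v w : ℕ → M), (∀ i ∈ φ.fv, v i = w i) →
    (Sat E v φ ↔ Sat E w φ) := by
  intro φ
  induction φ with
  | mem i j => intro v w h; simp [h i (by simp), h j (by simp)]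
  | eq i j => intro v w h; simp [h i (by simp), h j (by simp)]
  | not φ ih => intro v w h; simp [ih v w h]
  | and φ ψ ih1 ih2 =>
      intro v w h
      simp [ih1 v w (fun i hi => h i (Or.inl hi)), ih2 v w (fun i hi => h i (Or.inr hi))]
  | or φ ψ ih1 ih2 =>
      intro v w h
      simp [ih1 v w (fun i hi => h i (Or.inl hi)), ih2 v w (fun i hi => h i (Or.inr hi))]
  | imp φ ψ ih1 ih2 =>
      intro v w h
      simp [ih1 v w (fun i hi => h i (Or.inl hi)), ih2 v w (fun i hi => h i (Or.inr hi))]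
  | all i φ ih =>
      intro v w h
      simp only [sat_all]
      refine forall_congr' fun a => ih _ _ fun k hk => ?_
      rcases eq_or_ne k i with rfl | hki
      · simp
      · simp only [Function.update_of_ne hki]
        exact h k ⟨hk, hki⟩
  | ex i φ ih =>
      intro v w h
      simp only [sat_ex]
      refine exists_congr fun a => ih _ _ fun k hk => ?_
      rcases eq_or_ne k i with rfl | hki
      · simp
      · simp only [Function.update_of_ne hki]
        exact h k ⟨hk, hki⟩

lemma sat_rename {r : ℕ → ℕ} (hr : Function.Injective r) :
    ∀ (φ : Fml) (v : ℕ → M), Sat E v (φ.rename r) ↔ Sat E (v ∘ r) φ := by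
  intro φ
  induction φ with
  | mem i j => intro v; simp [Fml.rename]
  | eq i j => intro v; simp [Fml.rename]
  | not φ ih => intro v; simp [Fml.rename, ih]
  | and φ ψ ih1 ih2 => intro v; simp [Fml.rename, ih1, ih2]
  | or φ ψ ih1 ih2 => intro v; simp [Fml.rename, ih1, ih2]
  | imp φ ψ ih1 ih2 => intro v; simp [Fml.rename, ih1, ih2]
  | all i φ ih =>
      intro v
      simp only [Fml.rename, sat_all, ih]
      refine forall_congr' fun a => ?_
      rw [Function.update_comp_eq_of_injective _ hr]
  | ex i φ ih =>
      intro v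
      simp only [Fml.rename, sat_ex, ih]
      refine exists_congr fun a => ?_
      rw [Function.update_comp_eq_of_injective _ hr]


/-! ### Classes: basic lemmas -/

lemma isSigma_zero : IsSigma 0 = IsDelta0 := rfl
lemma isPi_zero : IsPi 0 = IsDelta0 := rfl
lemma isSigma_succ {n : ℕ} {φ : Fml} :
    IsSigma (n+1) φ ↔ ∃ i ψ, IsPi n ψ ∧ φ = .ex i ψ := Iff.rfl
lemma isPi_succ {n : ℕ} {φ : Fml} :
    IsPi (n+1) φ ↔ ∃ i ψ, IsSigma n ψ ∧ φ = .all i ψ := Iff.rfl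

lemma IsDelta0.rename_ {r : ℕ → ℕ} (hr : Function.Injective r) :
    ∀ {φ : Fml}, IsDelta0 φ → IsDelta0 (φ.rename r) := by
  intro φ h
  induction h with
  | mem i j => exact .mem _ _
  | eq i j => exact .eq _ _
  | not _ ih => exact .not ih
  | and _ _ ih1 ih2 => exact .and ih1 ih2
  | or _ _ ih1 ih2 => exact .or ih1 ih2
  | imp _ _ ih1 ih2 => exact .imp ih1 ih2
  | ball hij _ ih => exact .ball (fun h => hij (hr h)) ih
  | bex hij _ ih => exact .bex (fun h => hij (hr h)) ih

lemma isSigma_isPi_rename {r : ℕ → ℕ} (hr : Function.Injective r) :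
    ∀ n : ℕ, (∀ φ, IsSigma n φ → IsSigma n (φ.rename r)) ∧
      (∀ φ, IsPi n φ → IsPi n (φ.rename r)) := by
  intro n
  induction n with
  | zero => exact ⟨fun φ h => h.rename_ hr, fun φ h => h.rename_ hr⟩
  | succ n ih =>
      constructor
      · rintro φ ⟨i, ψ, hψ, rfl⟩
        exact ⟨r i, ψ.rename r, ih.2 ψ hψ, rfl⟩
      · rintro φ ⟨i, ψ, hψ, rfl⟩
        exact ⟨r i, ψ.rename r, ih.1 ψ hψ, rfl⟩

lemma IsSigma.rename_ {r : ℕ → ℕ} (hr : Function.Injective r) {n : ℕ} {φ : Fml}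
    (h : IsSigma n φ) : IsSigma n (φ.rename r) := (isSigma_isPi_rename hr n).1 φ h

lemma IsPi.rename_ {r : ℕ → ℕ} (hr : Function.Injective r) {n : ℕ} {φ : Fml}
    (h : IsPi n φ) : IsPi n (φ.rename r) := (isSigma_isPi_rename hr n).2 φ h

variable {M : Type} {E : M → M → Prop}

/-! ### dummy variables, alpha conversion -/

lemma sat_update_dummy {φ : Fml} {j : ℕ} (h : j ∉ φ.fv) (v : ℕ → M) (a : M) :
    Sat E (Function.update v j a) φ ↔ Sat E v φ := by
  refine sat_agree φ _ _ fun k hk => ?_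
  have hkj : k ≠ j := fun hkj => h (hkj ▸ hk)
  exact Function.update_of_ne hkj _ _

lemma sat_all_dummy [Nonempty M] {φ : Fml} {j : ℕ} (h : j ∉ φ.fv) (v : ℕ → M) :
    Sat E v (.all j φ) ↔ Sat E v φ := by
  simp only [sat_all]
  constructor
  · intro H; rcases ‹Nonempty M› with ⟨a⟩; exact (sat_update_dummy h v a).1 (H a)
  · intro H a; exact (sat_update_dummy h v a).2 H

lemma sat_ex_dummy [Nonempty M] {φ : Fml} {j : ℕ} (h : j ∉ φ.fv) (v : ℕ → M) :
    Sat E v (.ex j φ) ↔ Sat E v φ := by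
  simp only [sat_ex]
  constructor
  · rintro ⟨a, ha⟩; exact (sat_update_dummy h v a).1 ha
  · intro H; rcases ‹Nonempty M› with ⟨a⟩; exact ⟨a, (sat_update_dummy h v a).2 H⟩

lemma sat_update_swap {j j' : ℕ} {φ : Fml} (h : j' ∉ φ.fv) (v : ℕ → M) (a : M) :
    Sat E (Function.update v j' a) (φ.rename (Equiv.swap j j')) ↔
      Sat E (Function.update v j a) φ := by
  rw [sat_rename (Equiv.swap j j').injective]
  refine sat_agree φ _ _ fun k hk => ?_
  have hkj' : k ≠ j' := fun hkj' => h (hkj' ▸ hk)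
  simp only [Function.comp_apply]
  rcases eq_or_ne k j with rfl | hkj
  · rw [Equiv.swap_apply_left]; simp
  · rw [Equiv.swap_apply_of_ne_of_ne hkj hkj', Function.update_of_ne hkj,
      Function.update_of_ne hkj']

lemma fv_swap_subset {j j' : ℕ} {φ : Fml} (h : j' ∉ φ.fv) :
    (φ.rename (Equiv.swap j j')).fv ⊆ (φ.fv \ {j}) ∪ {j'} := by
  rw [Fml.fv_rename (Equiv.swap j j').injective]
  rintro k ⟨l, hl, rfl⟩
  rcases eq_or_ne l j with rfl | hlj
  · right; simp [Equiv.swap_apply_left]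
  · have hlj' : l ≠ j' := fun hlj' => h (hlj' ▸ hl)
    left
    rw [Equiv.swap_apply_of_ne_of_ne hlj hlj']
    exact ⟨hl, hlj⟩

/-! ### Definable predicates -/

/-- `P` is definable at class `C` with free variables in `s`. -/
def Df (E : M → M → Prop) (C : Fml → Prop) (s : Set ℕ) (P : (ℕ → M) → Prop) : Prop :=
  ∃ φ, C φ ∧ φ.fv ⊆ s ∧ ∀ v : ℕ → M, Sat E v φ ↔ P v

lemma Df.congr {C s} {P Q : (ℕ → M) → Prop} (h : Df E C s P) (hpq : ∀ v, P v ↔ Q v) :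
    Df E C s Q := by
  rcases h with ⟨φ, h1, h2, h3⟩
  exact ⟨φ, h1, h2, fun v => (h3 v).trans (hpq v)⟩

lemma Df.mono {C s s'} {P : (ℕ → M) → Prop} (h : Df E C s P) (hs : s ⊆ s') :
    Df E C s' P := by
  rcases h with ⟨φ, h1, h2, h3⟩
  exact ⟨φ, h1, h2.trans hs, h3⟩

lemma Df.of_formula {C : Fml → Prop} {φ : Fml} (h : C φ) : Df E C φ.fv (Sat E · φ) :=
  ⟨φ, h, subset_rfl, fun _ => Iff.rfl⟩

/-- negation: Σ_n ↦ Π_n -/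
lemma df_neg : ∀ (n : ℕ),
    (∀ {s} {P : (ℕ → M) → Prop}, Df E (IsSigma n) s P → Df E (IsPi n) s (fun v => ¬ P v)) ∧
    (∀ {s} {P : (ℕ → M) → Prop}, Df E (IsPi n) s P → Df E (IsSigma n) s (fun v => ¬ P v)) := by
  intro n
  induction n with
  | zero =>
      constructor <;>
      · rintro s P ⟨φ, h1, h2, h3⟩
        exact ⟨φ.not, IsDelta0.not h1, h2, fun v => by simp [h3 v]⟩
  | succ n ih =>
      constructor
      · rintro s P ⟨φ, ⟨i, ψ, hψ, rfl⟩, h2, h3⟩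
        rcases ih.2 (Df.of_formula (E := E) hψ) with ⟨ψ', h1', h2', h3'⟩
        refine ⟨.all i ψ', isPi_succ.2 ⟨i, ψ', h1', rfl⟩,
          (Set.diff_subset_diff_left h2').trans h2, fun v => ?_⟩
        show Sat E v (.all i ψ') ↔ ¬ P v
        rw [← h3 v]
        simp only [sat_all, sat_ex, not_exists]
        exact forall_congr' fun a => h3' _
      · rintro s P ⟨φ, ⟨i, ψ, hψ, rfl⟩, h2, h3⟩
        rcases ih.1 (Df.of_formula (E := E) hψ) with ⟨ψ', h1', h2', h3'⟩
        refine ⟨.ex i ψ', isSigma_succ.2 ⟨i, ψ', h1', rfl⟩,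
          (Set.diff_subset_diff_left h2').trans h2, fun v => ?_⟩
        show Sat E v (.ex i ψ') ↔ ¬ P v
        rw [← h3 v]
        simp only [sat_all, sat_ex, not_forall]
        exact exists_congr fun a => h3' _

lemma Df.neg_sigma {n s} {P : (ℕ → M) → Prop} (h : Df E (IsSigma n) s P) :
    Df E (IsPi n) s (fun v => ¬ P v) := (df_neg n).1 h

lemma Df.neg_pi {n s} {P : (ℕ → M) → Prop} (h : Df E (IsPi n) s P) :
    Df E (IsSigma n) s (fun v => ¬ P v) := (df_neg n).2 h

/-- introducing a quantifier -/
lemma Df.exI {n s} {P : (ℕ → M) → Prop} (h : Df E (IsPi n) s P) (i : ℕ) :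
    Df E (IsSigma (n+1)) (s \ {i}) (fun v => ∃ a, P (Function.update v i a)) := by
  rcases h with ⟨φ, h1, h2, h3⟩
  refine ⟨.ex i φ, isSigma_succ.2 ⟨i, φ, h1, rfl⟩, Set.diff_subset_diff_left h2,
    fun v => ?_⟩
  simp only [sat_ex]
  exact exists_congr fun a => h3 _

lemma Df.allI {n s} {P : (ℕ → M) → Prop} (h : Df E (IsSigma n) s P) (i : ℕ) :
    Df E (IsPi (n+1)) (s \ {i}) (fun v => ∀ a, P (Function.update v i a)) := by
  rcases h with ⟨φ, h1, h2, h3⟩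
  refine ⟨.all i φ, isPi_succ.2 ⟨i, φ, h1, rfl⟩, Set.diff_subset_diff_left h2,
    fun v => ?_⟩
  simp only [sat_all]
  exact forall_congr' fun a => h3 _

/-- renaming along a permutation -/
lemma Df.perm {C : Fml → Prop} {s} {P : (ℕ → M) → Prop}
    (hC : ∀ φ, C φ → C (φ.rename (⇑(π : Equiv.Perm ℕ))))
    (h : Df E C s P) :
    Df E C (π '' s) (fun v => P (v ∘ π)) := by
  rcases h with ⟨φ, h1, h2, h3⟩
  refine ⟨φ.rename π, hC φ h1, ?_, fun v => ?_⟩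
  · rw [Fml.fv_rename π.injective]
    exact Set.image_mono h2
  · rw [sat_rename π.injective]
    exact h3 _

/-! ### padding / lifting -/

lemma df_pad [Nonempty M] : ∀ (m : ℕ) {s} {P : (ℕ → M) → Prop}, Df E IsDelta0 s P → s.Finite →
    Df E (IsSigma m) s P ∧ Df E (IsPi m) s P := by
  intro m
  induction m with
  | zero => exact fun h _ => ⟨h, h⟩
  | succ m ih =>
      intro s P h hs
      rcases ih h hs with ⟨⟨φσ, hσ1, hσ2, hσ3⟩, ⟨φπ, hπ1, hπ2, hπ3⟩⟩
      rcases Fml.fresh_exists hs with ⟨j, hj⟩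
      constructor
      · refine ⟨.ex j φπ, isSigma_succ.2 ⟨j, φπ, hπ1, rfl⟩,
          Set.diff_subset.trans hπ2, fun v => ?_⟩
        rw [sat_ex_dummy (fun hmem => hj (hπ2 hmem)) v]
        exact hπ3 v
      · refine ⟨.all j φσ, isPi_succ.2 ⟨j, φσ, hσ1, rfl⟩,
          Set.diff_subset.trans hσ2, fun v => ?_⟩
        rw [sat_all_dummy (fun hmem => hj (hσ2 hmem)) v]
        exact hσ3 v

lemma df_lift [Nonempty M] : ∀ (m : ℕ), ∀ {m'}, m ≤ m' → ∀ {s} {P : (ℕ → M) → Prop},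
    s.Finite →
    (Df E (IsSigma m) s P → Df E (IsSigma m') s P) ∧
    (Df E (IsPi m) s P → Df E (IsPi m') s P) := by
  intro m
  induction m with
  | zero =>
      intro m' _ s P hs
      exact ⟨fun h => (df_pad m' h hs).1, fun h => (df_pad m' h hs).2⟩
  | succ m ih =>
      intro m' hm s P hs
      obtain ⟨k, rfl⟩ : ∃ k, m' = k + 1 := ⟨m' - 1, by omega⟩
      have hmk : m ≤ k := by omega
      constructor
      · rintro ⟨φ, ⟨i, ψ, hψ, rfl⟩, h2, h3⟩
        have : Df E (IsPi m) ψ.fv (Sat E · ψ) := Df.of_formula hψ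
        rcases (ih hmk (Fml.fv_finite ψ)).2 this with ⟨ψ', h1', h2', h3'⟩
        refine ⟨.ex i ψ', isSigma_succ.2 ⟨i, ψ', h1', rfl⟩,
          (Set.diff_subset_diff_left h2').trans h2, fun v => ?_⟩
        show Sat E v (.ex i ψ') ↔ P v
        rw [← h3 v]
        simp only [sat_ex]
        exact exists_congr fun a => h3' _
      · rintro ⟨φ, ⟨i, ψ, hψ, rfl⟩, h2, h3⟩
        have : Df E (IsSigma m) ψ.fv (Sat E · ψ) := Df.of_formula hψ
        rcases (ih hmk (Fml.fv_finite ψ)).1 this with ⟨ψ', h1', h2', h3'⟩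
        refine ⟨.all i ψ', isPi_succ.2 ⟨i, ψ', h1', rfl⟩,
          (Set.diff_subset_diff_left h2').trans h2, fun v => ?_⟩
        show Sat E v (.all i ψ') ↔ P v
        rw [← h3 v]
        simp only [sat_all]
        exact forall_congr' fun a => h3' _

lemma Df.lift_sigma [Nonempty M] {m m' s} {P : (ℕ → M) → Prop} (h : Df E (IsSigma m) s P)
    (hm : m ≤ m') (hs : s.Finite) : Df E (IsSigma m') s P := (df_lift m hm hs).1 h

lemma Df.lift_pi [Nonempty M] {m m' s} {P : (ℕ → M) → Prop} (h : Df E (IsPi m) s P)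
    (hm : m ≤ m') (hs : s.Finite) : Df E (IsPi m') s P := (df_lift m hm hs).2 h

lemma Df.pi_to_sigma_succ [Nonempty M] {m s} {P : (ℕ → M) → Prop} (h : Df E (IsPi m) s P)
    (hs : s.Finite) : Df E (IsSigma (m+1)) s P := by
  rcases h with ⟨φ, h1, h2, h3⟩
  rcases Fml.fresh_exists hs with ⟨j, hj⟩
  refine ⟨.ex j φ, isSigma_succ.2 ⟨j, φ, h1, rfl⟩,
    Set.diff_subset.trans h2, fun v => ?_⟩
  rw [sat_ex_dummy (fun hmem => hj (h2 hmem)) v]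
  exact h3 v

/-! ### pushing Δ₀ conjuncts inside -/

lemma df_pushAnd [Nonempty M] : ∀ (n : ℕ),
    (∀ (φ δ : Fml), IsSigma n φ → IsDelta0 δ →
      Df E (IsSigma n) (φ.fv ∪ δ.fv) (fun v => Sat E v φ ∧ Sat E v δ)) ∧
    (∀ (φ δ : Fml), IsPi n φ → IsDelta0 δ →
      Df E (IsPi n) (φ.fv ∪ δ.fv) (fun v => Sat E v φ ∧ Sat E v δ)) := by
  intro n
  induction n with
  | zero =>
      constructor <;>
      · intro φ δ hφ hδ
        exact ⟨φ.and δ, IsDelta0.and hφ hδ, subset_rfl, fun v => by simp⟩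
  | succ n ih =>
      constructor
      · rintro φ δ ⟨i, ψ, hψ, rfl⟩ hδ
        rcases Fml.fresh_exists ((Fml.fv_finite ψ).union (Fml.fv_finite δ)) with ⟨i', hi'⟩
        have hi'ψ : i' ∉ ψ.fv := fun h => hi' (Or.inl h)
        have hi'δ : i' ∉ δ.fv := fun h => hi' (Or.inr h)
        have hψ' : IsPi n (ψ.rename (Equiv.swap i i')) :=
          IsPi.rename_ (Equiv.swap i i').injective hψ
        rcases ih.2 (ψ.rename (Equiv.swap i i')) δ hψ' hδ with ⟨χ, h1, h2, h3⟩
        refine ⟨.ex i' χ, isSigma_succ.2 ⟨i', χ, h1, rfl⟩, ?_, fun v => ?_⟩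
        · intro k hk
          rcases hk with ⟨hk1, hk2⟩
          have hk2' : k ≠ i' := by simpa using hk2
          rcases h2 hk1 with hmem | hmem
          · rcases fv_swap_subset hi'ψ hmem with h | h
            · exact Or.inl (by simpa using h)
            · exact absurd (by simpa using h) hk2'
          · exact Or.inr hmem
        · simp only [sat_ex]
          constructor
          · rintro ⟨a, ha⟩
            rcases (h3 _).1 ha with ⟨hl, hr⟩
            exact ⟨⟨a, (sat_update_swap hi'ψ v a).1 hl⟩, (sat_update_dummy hi'δ v a).1 hr⟩
          · rintro ⟨⟨a, ha⟩, hd⟩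
            exact ⟨a, (h3 _).2 ⟨(sat_update_swap hi'ψ v a).2 ha,
              (sat_update_dummy hi'δ v a).2 hd⟩⟩
      · rintro φ δ ⟨i, ψ, hψ, rfl⟩ hδ
        rcases Fml.fresh_exists ((Fml.fv_finite ψ).union (Fml.fv_finite δ)) with ⟨i', hi'⟩
        have hi'ψ : i' ∉ ψ.fv := fun h => hi' (Or.inl h)
        have hi'δ : i' ∉ δ.fv := fun h => hi' (Or.inr h)
        have hψ' : IsSigma n (ψ.rename (Equiv.swap i i')) :=
          IsSigma.rename_ (Equiv.swap i i').injective hψ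
        rcases ih.1 (ψ.rename (Equiv.swap i i')) δ hψ' hδ with ⟨χ, h1, h2, h3⟩
        refine ⟨.all i' χ, isPi_succ.2 ⟨i', χ, h1, rfl⟩, ?_, fun v => ?_⟩
        · intro k hk
          rcases hk with ⟨hk1, hk2⟩
          have hk2' : k ≠ i' := by simpa using hk2
          rcases h2 hk1 with hmem | hmem
          · rcases fv_swap_subset hi'ψ hmem with h | h
            · exact Or.inl (by simpa using h)
            · exact absurd (by simpa using h) hk2'
          · exact Or.inr hmem
        · simp only [sat_all]
          constructor
          · intro H
            rcases ‹Nonempty M› with ⟨a0⟩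
            refine ⟨fun a => ((h3 _).1 (H a)).1 |> (sat_update_swap hi'ψ v a).1, ?_⟩
            exact (sat_update_dummy hi'δ v a0).1 ((h3 _).1 (H a0)).2
          · rintro ⟨hl, hr⟩ a
            exact (h3 _).2 ⟨(sat_update_swap hi'ψ v a).2 (hl a),
              (sat_update_dummy hi'δ v a).2 hr⟩

lemma Df.and_delta_pi [Nonempty M] {n s s'} {P D : (ℕ → M) → Prop}
    (h : Df E (IsPi n) s P) (hd : Df E IsDelta0 s' D) :
    Df E (IsPi n) (s ∪ s') (fun v => P v ∧ D v) := by
  rcases h with ⟨φ, h1, h2, h3⟩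
  rcases hd with ⟨δ, hd1, hd2, hd3⟩
  rcases (df_pushAnd (E := E) n).2 φ δ h1 hd1 with ⟨χ, hc1, hc2, hc3⟩
  exact ⟨χ, hc1, hc2.trans (Set.union_subset_union h2 hd2), fun v =>
    (hc3 v).trans (and_congr (h3 v) (hd3 v))⟩

lemma Df.and_delta_sigma [Nonempty M] {n s s'} {P D : (ℕ → M) → Prop}
    (h : Df E (IsSigma n) s P) (hd : Df E IsDelta0 s' D) :
    Df E (IsSigma n) (s ∪ s') (fun v => P v ∧ D v) := by
  rcases h with ⟨φ, h1, h2, h3⟩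
  rcases hd with ⟨δ, hd1, hd2, hd3⟩
  rcases (df_pushAnd (E := E) n).1 φ δ h1 hd1 with ⟨χ, hc1, hc2, hc3⟩
  exact ⟨χ, hc1, hc2.trans (Set.union_subset_union h2 hd2), fun v =>
    (hc3 v).trans (and_congr (h3 v) (hd3 v))⟩

lemma Df.imp_delta_pi [Nonempty M] {n s s'} {P D : (ℕ → M) → Prop}
    (h : Df E (IsPi n) s P) (hd : Df E IsDelta0 s' D) :
    Df E (IsPi n) (s ∪ s') (fun v => D v → P v) := by
  have h1 := (h.neg_pi.and_delta_sigma hd).neg_sigma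
  refine h1.congr fun v => ?_
  constructor
  · intro hv hD
    by_contra hP
    exact hv ⟨hP, hD⟩
  · rintro hv ⟨hP, hD⟩
    exact hP (hv hD)


/-! ### Δ₀ bounded quantifiers -/

lemma Df.and_d0 {s s'} {P Q : (ℕ → M) → Prop} (h : Df E IsDelta0 s P)
    (h' : Df E IsDelta0 s' Q) : Df E IsDelta0 (s ∪ s') (fun v => P v ∧ Q v) := by
  rcases h with ⟨φ, h1, h2, h3⟩
  rcases h' with ⟨ψ, g1, g2, g3⟩
  exact ⟨φ.and ψ, IsDelta0.and h1 g1, Set.union_subset_union h2 g2,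
    fun v => by simpa using and_congr (h3 v) (g3 v)⟩

lemma Df.bex_d0 {s} {P : (ℕ → M) → Prop} (h : Df E IsDelta0 s P) (c d : ℕ) (hcd : c ≠ d) :
    Df E IsDelta0 ((s \ {c}) ∪ {d}) (fun v => ∃ a, E a (v d) ∧ P (Function.update v c a)) := by
  rcases h with ⟨φ, h1, h2, h3⟩
  refine ⟨.ex c ((Fml.mem c d).and φ), IsDelta0.bex hcd h1, ?_, fun v => ?_⟩
  · intro k hk
    rcases hk with ⟨hk1, hk2⟩
    have hk2' : k ≠ c := by simpa using hk2
    rcases hk1 with hk | hk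
    · rcases hk with hk | hk
      · exact absurd hk hk2'
      · exact Or.inr hk
    · exact Or.inl ⟨h2 hk, hk2'⟩
  · simp only [sat_ex, sat_and, sat_mem]
    refine exists_congr fun a => and_congr ?_ (h3 _)
    rw [Function.update_self, Function.update_of_ne (Ne.symm hcd)]

/-! ### pairs -/

lemma pair_cases {p a b c d : M} (h1 : IsPairOf E p a b) (h2 : IsPairOf E p c d) :
    (a = c ∧ b = d) ∨ (a = d ∧ b = c) := by
  have ha : a = c ∨ a = d := (h2 a).1 ((h1 a).2 (Or.inl rfl))
  have hb : b = c ∨ b = d := (h2 b).1 ((h1 b).2 (Or.inr rfl))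
  have hc : c = a ∨ c = b := (h1 c).1 ((h2 c).2 (Or.inl rfl))
  have hd : d = a ∨ d = b := (h1 d).1 ((h2 d).2 (Or.inr rfl))
  rcases ha with rfl | rfl
  · rcases hd with rfl | rfl
    · tauto
    · tauto
  · rcases hc with rfl | rfl
    · tauto
    · tauto

lemma opair_inj {z a b c d : M} (h1 : IsOPairOf E z a b) (h2 : IsOPairOf E z c d) :
    a = c ∧ b = d := by
  rcases h1 with ⟨s, t, hs, ht, hz⟩
  rcases h2 with ⟨s', t', hs', ht', hz'⟩
  have haw : ∀ w, E w z → E a w := by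
    intro w hw
    rcases (hz w).1 hw with rfl | rfl
    · exact (hs a).2 (Or.inl rfl)
    · exact (ht a).2 (Or.inl rfl)
  have hac : a = c := by
    have h := haw s' ((hz' s').2 (Or.inl rfl))
    rcases (hs' a).1 h with rfl | rfl <;> rfl
  refine ⟨hac, ?_⟩
  by_cases hab : a = b
  · -- b = a = d
    have hdt' : E d t' := (ht' d).2 (Or.inr rfl)
    have hda : d = a := by
      rcases (hz t').1 ((hz' t').2 (Or.inr rfl)) with rfl | rfl
      · rcases (hs d).1 hdt' with rfl | rfl <;> rfl
      · rcases (ht d).1 hdt' with rfl | h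
        · rfl
        · rw [h, ← hab]
    rw [← hab, hda]
  · -- a ≠ b
    rcases (hz' t).1 ((hz t).2 (Or.inr rfl)) with hts' | htt'
    · -- t = s' = {c}: contradiction
      exfalso
      have hbc : b = c := by
        have : E b s' := hts' ▸ (ht b).2 (Or.inr rfl)
        rcases (hs' b).1 this with rfl | rfl <;> rfl
      exact hab (hac.trans hbc.symm)
    · -- t = t'
      have hbd : b = c ∨ b = d := by
        have : E b t' := htt' ▸ (ht b).2 (Or.inr rfl)
        exact (ht' b).1 this
      rcases hbd with hbc | hbd
      · exact absurd (hac.trans hbc.symm) hab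
      · exact hbd

section DB0
variable (hM : SatDB0 E)
include hM

lemma db0_nonempty : Nonempty M := by
  rcases hM.2.1 with ⟨e, -⟩
  exact ⟨e⟩

lemma db0_pair : ∀ a b : M, ∃ p, IsPairOf E p a b := hM.2.2.1

lemma db0_opair : ∀ a b : M, ∃ z, IsOPairOf E z a b := by
  intro a b
  rcases hM.2.2.1 a a with ⟨s, hs⟩
  rcases hM.2.2.1 a b with ⟨t, ht⟩
  rcases hM.2.2.1 s t with ⟨z, hz⟩
  exact ⟨z, s, t, hs, ht, hz⟩

lemma db0_union : ∀ a : M, ∃ u, ∀ x, E x u ↔ ∃ y, E y a ∧ E x y := hM.2.2.2.1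

end DB0

/-! ### codes for tuples -/

def Codes (E : M → M → Prop) : M → List M → Prop
  | _, [] => True
  | e, [a] => e = a
  | e, a :: b :: rest => ∃ e', IsOPairOf E e a e' ∧ Codes E e' (b :: rest)

lemma codes_exists (hM : SatDB0 E) : ∀ (l : List M), l ≠ [] → ∃ e, Codes E e l := by
  intro l
  induction l with
  | nil => intro h; exact absurd rfl h
  | cons a rest ih =>
      intro _
      cases rest with
      | nil => exact ⟨a, rfl⟩
      | cons b rest' =>
          rcases ih (by simp) with ⟨e', he'⟩
          rcases db0_opair hM a e' with ⟨e, he⟩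
          exact ⟨e, e', he, he'⟩

/-! ### Δ₀ definability of pairing -/

lemma df_isPair (i j l : ℕ) : Df E IsDelta0 {i, j, l} (fun v => IsPairOf E (v l) (v i) (v j)) := by
  set w : ℕ := max i (max j l) + 1 with hw
  have hwi : w ≠ i := by omega
  have hwj : w ≠ j := by omega
  have hwl : w ≠ l := by omega
  refine ⟨(Fml.mem i l).and ((Fml.mem j l).and
    (.all w ((Fml.mem w l).imp ((Fml.eq w i).or (Fml.eq w j))))),
    IsDelta0.and (.mem _ _) (IsDelta0.and (.mem _ _) (.ball hwl (IsDelta0.or (.eq _ _) (.eq _ _)))),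
    ?_, fun v => ?_⟩
  · intro k hk
    simp only [Fml.fv_and, Fml.fv_all, Fml.fv_imp, Fml.fv_or, Fml.fv_mem, Fml.fv_eq] at hk
    simp only [Set.mem_union, Set.mem_diff, Set.mem_insert_iff, Set.mem_singleton_iff] at hk ⊢
    tauto
  · simp only [sat_and, sat_mem, sat_all, sat_imp, sat_or, sat_eq]
    constructor
    · rintro ⟨hi, hj, hall⟩ x
      constructor
      · intro hx
        have := hall x
        simp only [Function.update_self, Function.update_of_ne (Ne.symm hwl),
          Function.update_of_ne (Ne.symm hwi), Function.update_of_ne (Ne.symm hwj)] at this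
        exact this hx
      · rintro (rfl | rfl) <;> assumption
    · intro h
      refine ⟨(h _).2 (Or.inl rfl), (h _).2 (Or.inr rfl), fun x => ?_⟩
      simp only [Function.update_self, Function.update_of_ne (Ne.symm hwl),
        Function.update_of_ne (Ne.symm hwi), Function.update_of_ne (Ne.symm hwj)]
      exact (h x).1

lemma df_isOPair (i j l : ℕ) (hil : i ≠ l) (hjl : j ≠ l) :
    Df E IsDelta0 {i, j, l} (fun v => IsOPairOf E (v l) (v i) (v j)) := by
  set s : ℕ := max i (max j l) + 1 with hs
  set t : ℕ := max i (max j l) + 2 with hts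
  have hst : s ≠ t := by omega
  have hsi : s ≠ i := by omega
  have hsj : s ≠ j := by omega
  have hsl : s ≠ l := by omega
  have hti : t ≠ i := by omega
  have htj : t ≠ j := by omega
  have htl : t ≠ l := by omega
  have inner : Df E IsDelta0 ({i, j, l, s, t} : Set ℕ) (fun v =>
      IsPairOf E (v s) (v i) (v i) ∧ IsPairOf E (v t) (v i) (v j) ∧
        IsPairOf E (v l) (v s) (v t)) := by
    have d1 := df_isPair (E := E) i i s
    have d2 := df_isPair (E := E) i j t
    have d3 := df_isPair (E := E) s t l
    have := d1.and_d0 (d2.and_d0 d3)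
    refine this.mono ?_
    intro k hk
    simp only [Set.mem_union, Set.mem_insert_iff, Set.mem_singleton_iff] at hk ⊢
    tauto
  -- bound t by l, then s by l
  have step1 := inner.bex_d0 t l htl
  have step2 := step1.bex_d0 s l hsl
  refine (step2.mono ?_).congr fun v => ?_
  · intro k hk
    simp only [Set.mem_union, Set.mem_diff, Set.mem_insert_iff, Set.mem_singleton_iff] at hk ⊢
    tauto
  · show (∃ a, E a (v l) ∧ ∃ b, _ ∧ _) ↔ _
    simp only [Function.update_apply]
    simp only [if_neg hst, if_neg (Ne.symm hst), if_neg hsi, if_neg (Ne.symm hsi),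
      if_neg hsj, if_neg (Ne.symm hsj), if_neg hsl, if_neg (Ne.symm hsl),
      if_neg hti, if_neg (Ne.symm hti), if_neg htj, if_neg (Ne.symm htj),
      if_neg htl, if_neg (Ne.symm htl), if_pos rfl]
    constructor
    · rintro ⟨a, -, b, -, h1, h2, h3⟩
      exact ⟨a, b, h1, h2, h3⟩
    · rintro ⟨a, b, h1, h2, h3⟩
      exact ⟨a, (h3 a).2 (Or.inl rfl), b, (h3 b).2 (Or.inr rfl), h1, h2, h3⟩

/-! ### permutations with prescribed values -/

lemma perm_exists : ∀ (ps : List (ℕ × ℕ)), (ps.map Prod.fst).Nodup → (ps.map Prod.snd).Nodup →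
    ∃ π : Equiv.Perm ℕ, ∀ pr ∈ ps, π pr.1 = pr.2 := by
  intro ps
  induction ps with
  | nil => exact fun _ _ => ⟨1, by simp⟩
  | cons pr rest ih =>
      intro h1 h2
      simp only [List.map_cons, List.nodup_cons, List.mem_map] at h1 h2
      rcases ih h1.2 h2.2 with ⟨π', hπ'⟩
      refine ⟨π'.trans (Equiv.swap (π' pr.1) pr.2), ?_⟩
      intro q hq
      rcases List.mem_cons.1 hq with rfl | hq'
      · simp [Equiv.swap_apply_left]
      · have hq2 := hπ' q hq'
        have hne1 : π' q.1 ≠ π' pr.1 := fun h => h1.1 ⟨q, hq', π'.injective h⟩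
        have hne2 : π' q.1 ≠ pr.2 := by
          rw [hq2]
          intro h
          exact h2.1 ⟨q, hq', h⟩
        rw [Equiv.trans_apply, hq2, Equiv.swap_apply_of_ne_of_ne (hq2 ▸ hne1) (hq2 ▸ hne2)]

lemma perm_exists3 (c j s0 s1 : ℕ) (hcj : c ≠ j) (hs : s0 ≠ s1) (A : Set ℕ) (hA : A.Finite) :
    ∀ K : List ℕ, K.Nodup → c ∉ K → j ∉ K →
    ∃ π : Equiv.Perm ℕ, π c = s0 ∧ π j = s1 ∧ ∀ p ∈ K, π p ∉ A ∧ π p ≠ s0 ∧ π p ≠ s1 := by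
  intro K
  induction K with
  | nil =>
      intro _ _ _
      rcases perm_exists [(c, s0), (j, s1)] (by simp [hcj]) (by simp [hs]) with ⟨π, hπ⟩
      exact ⟨π, hπ (c, s0) (by simp), hπ (j, s1) (by simp), by simp⟩
  | cons p rest ih =>
      intro hnd hc hj
      simp only [List.nodup_cons] at hnd
      have hc' : c ∉ rest := fun h => hc (List.mem_cons_of_mem _ h)
      have hj' : j ∉ rest := fun h => hj (List.mem_cons_of_mem _ h)
      rcases ih hnd.2 hc' hj' with ⟨π', h0, h1, hrest⟩
      have hfin : (A ∪ {s0, s1, π' p} ∪ {k | k ∈ rest.map π'}).Finite :=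
        ((hA.union ((Set.finite_singleton _).insert _ |>.insert _)).union
          (rest.map π').finite_toSet)
      rcases Fml.fresh_exists hfin with ⟨m, hm⟩
      have hmA : m ∉ A := fun h => hm (Or.inl (Or.inl h))
      have hms0 : m ≠ s0 := fun h => hm (Or.inl (Or.inr (by simp [h])))
      have hms1 : m ≠ s1 := fun h => hm (Or.inl (Or.inr (by simp [h])))
      have hmp : m ≠ π' p := fun h => hm (Or.inl (Or.inr (by simp [h])))
      have hmrest : ∀ q ∈ rest, m ≠ π' q := by
        intro q hq h
        exact hm (Or.inr (by simp only [Set.mem_setOf_eq, List.mem_map]; exact ⟨q, hq, h.symm⟩))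
      refine ⟨π'.trans (Equiv.swap (π' p) m), ?_, ?_, ?_⟩
      · have hne1 : π' c ≠ π' p := fun h => (hc (by simp [π'.injective h]))
        have hne2 : π' c ≠ m := by rw [h0]; exact fun h => hms0 h.symm
        rw [Equiv.trans_apply, h0, Equiv.swap_apply_of_ne_of_ne (h0 ▸ hne1) (h0 ▸ hne2)]
      · have hne1 : π' j ≠ π' p := fun h => (hj (by simp [π'.injective h]))
        have hne2 : π' j ≠ m := by rw [h1]; exact fun h => hms1 h.symm
        rw [Equiv.trans_apply, h1, Equiv.swap_apply_of_ne_of_ne (h1 ▸ hne1) (h1 ▸ hne2)]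
      · intro q hq
        rcases List.mem_cons.1 hq with rfl | hq'
        · simp only [Equiv.trans_apply, Equiv.swap_apply_left]
          exact ⟨hmA, hms0, hms1⟩
        · have hne1 : π' q ≠ π' p := fun h => hnd.1 (by rw [π'.injective h] at hq'; exact hq')
          have hne2 : π' q ≠ m := fun h => hmrest q hq' h.symm
          simp only [Equiv.trans_apply, Equiv.swap_apply_of_ne_of_ne hne1 hne2]
          exact hrest q hq'

variable {M : Type} {E : M → M → Prop}

/-! ### alpha conversion for ∃ -/

lemma alpha_ex {m : ℕ} (ψ : Fml) (hψ : IsPi m ψ) (i : ℕ) (avoid : Set ℕ) (hav : avoid.Finite) :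
    ∃ i' ψ', i' ∉ avoid ∧ IsPi m ψ' ∧ ψ'.fv ⊆ (ψ.fv \ {i}) ∪ {i'} ∧
      (∀ v : ℕ → M, Sat E v (.ex i' ψ') ↔ Sat E v (.ex i ψ)) ∧ i' ∉ ψ'.fv \ {i'} := by
  rcases Fml.fresh_exists (hav.union (Fml.fv_finite ψ)) with ⟨i', hi'⟩
  have hi'av : i' ∉ avoid := fun h => hi' (Or.inl h)
  have hi'ψ : i' ∉ ψ.fv := fun h => hi' (Or.inr h)
  refine ⟨i', ψ.rename (Equiv.swap i i'), hi'av, IsPi.rename_ (Equiv.swap i i').injective hψ,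
    fv_swap_subset hi'ψ, fun v => ?_, by simp⟩
  simp only [sat_ex]
  exact exists_congr fun a => sat_update_swap hi'ψ v a

lemma alpha_all {m : ℕ} (σ : Fml) (hσ : IsSigma m σ) (j : ℕ) (avoid : Set ℕ)
    (hav : avoid.Finite) :
    ∃ j' σ', j' ∉ avoid ∧ IsSigma m σ' ∧ σ'.fv ⊆ (σ.fv \ {j}) ∪ {j'} ∧
      ∀ v : ℕ → M, (∀ a, Sat E (Function.update v j' a) σ') ↔
        (∀ a, Sat E (Function.update v j a) σ) := by
  rcases Fml.fresh_exists (hav.union (Fml.fv_finite σ)) with ⟨j', hj'⟩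
  have hj'av : j' ∉ avoid := fun h => hj' (Or.inl h)
  have hj'σ : j' ∉ σ.fv := fun h => hj' (Or.inr h)
  refine ⟨j', σ.rename (Equiv.swap j j'), hj'av, IsSigma.rename_ (Equiv.swap j j').injective hσ,
    fv_swap_subset hj'σ, fun v => ?_⟩
  exact forall_congr' fun a => sat_update_swap hj'σ v a

/-! ### statements of the absorption bundle -/

def AbsS (E : M → M → Prop) (m : ℕ) : Prop :=
  ∀ φ, IsSigma m φ → ∀ c d : ℕ, c ≠ d →
    Df E (IsSigma m) ((φ.fv \ {c}) ∪ {d})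
      (fun v => ∃ a, E a (v d) ∧ Sat E (Function.update v c a) φ)

def AbsP (E : M → M → Prop) (m : ℕ) : Prop :=
  ∀ φ, IsPi m φ → ∀ c d : ℕ, c ≠ d →
    Df E (IsPi m) ((φ.fv \ {c}) ∪ {d})
      (fun v => ∃ a, E a (v d) ∧ Sat E (Function.update v c a) φ)

def PackL (E : M → M → Prop) (m : ℕ) : Prop :=
  ∀ (L : List ℕ), L.Nodup → ∀ ℓ : ℕ, ℓ ∉ L → ∀ φ, IsPi m φ → ℓ ∉ φ.fv →
    ∃ φ', IsPi m φ' ∧ φ'.fv ⊆ (φ.fv \ {k | k ∈ L}) ∪ {ℓ} ∧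
      ∀ v : ℕ → M, Codes E (v ℓ) (L.map v) → (Sat E v φ' ↔ Sat E v φ)

/-! ### Df-level bounded quantifiers from absorption -/

lemma dfBexS {m s} {P : (ℕ → M) → Prop} (hA : AbsS E m) (h : Df E (IsSigma m) s P)
    (c d : ℕ) (hcd : c ≠ d) :
    Df E (IsSigma m) ((s \ {c}) ∪ {d})
      (fun v => ∃ a, E a (v d) ∧ P (Function.update v c a)) := by
  rcases h with ⟨φ, h1, h2, h3⟩
  refine ((hA φ h1 c d hcd).mono ?_).congr fun v => ?_
  · exact Set.union_subset_union (Set.diff_subset_diff_left h2) subset_rfl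
  · exact exists_congr fun a => and_congr_right fun _ => h3 _

lemma dfBexP {m s} {P : (ℕ → M) → Prop} (hA : AbsP E m) (h : Df E (IsPi m) s P)
    (c d : ℕ) (hcd : c ≠ d) :
    Df E (IsPi m) ((s \ {c}) ∪ {d})
      (fun v => ∃ a, E a (v d) ∧ P (Function.update v c a)) := by
  rcases h with ⟨φ, h1, h2, h3⟩
  refine ((hA φ h1 c d hcd).mono ?_).congr fun v => ?_
  · exact Set.union_subset_union (Set.diff_subset_diff_left h2) subset_rfl
  · exact exists_congr fun a => and_congr_right fun _ => h3 _

lemma dfBallS {m s} {P : (ℕ → M) → Prop} (hA : AbsP E m) (h : Df E (IsSigma m) s P)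
    (c d : ℕ) (hcd : c ≠ d) :
    Df E (IsSigma m) ((s \ {c}) ∪ {d})
      (fun v => ∀ a, E a (v d) → P (Function.update v c a)) := by
  have h1 := (dfBexP hA h.neg_sigma c d hcd).neg_pi
  refine h1.congr fun v => ?_
  constructor
  · intro hv a ha
    by_contra hP
    exact hv ⟨a, ha, hP⟩
  · rintro hv ⟨a, ha, hP⟩
    exact hP (hv a ha)

lemma dfBallP {m s} {P : (ℕ → M) → Prop} (hA : AbsS E m) (h : Df E (IsPi m) s P)
    (c d : ℕ) (hcd : c ≠ d) :
    Df E (IsPi m) ((s \ {c}) ∪ {d})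
      (fun v => ∀ a, E a (v d) → P (Function.update v c a)) := by
  have h1 := (dfBexS hA h.neg_pi c d hcd).neg_sigma
  refine h1.congr fun v => ?_
  constructor
  · intro hv a ha
    by_contra hP
    exact hv ⟨a, ha, hP⟩
  · rintro hv ⟨a, ha, hP⟩
    exact hP (hv a ha)

@[simp] lemma val3_zero (x y v : M) : val3 x y v 0 = x := rfl
@[simp] lemma val3_one (x y v : M) : val3 x y v 1 = y := rfl
@[simp] lemma val3_two (x y v : M) : val3 x y v 2 = v := rfl
@[simp] lemma val2_zero (x v : M) : val2 x v 0 = x := rfl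
lemma val2_app {k : ℕ} (hk : k ≠ 0) (x v : M) : val2 x v k = v := by
  simp [val2, hk]
@[simp] lemma val2_one (x v : M) : val2 x v 1 = v := rfl
@[simp] lemma val2_two (x v : M) : val2 x v 2 = v := rfl

lemma codes_exists' [Nonempty M] (hM : SatDB0 E) : ∀ (l : List M), ∃ e, Codes E e l := by
  intro l
  cases l with
  | nil => rcases ‹Nonempty M› with ⟨a⟩; exact ⟨a, trivial⟩
  | cons a rest => exact codes_exists hM _ (by simp)

/-- The central packing lemma: turn a Π_m matrix with arbitrary parameters into a
formula reading two designated slots `s0, s1` and a coded parameter at slot `ℓ`. -/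
lemma genInstance2 [Nonempty M] {m : ℕ} (hM : SatDB0 E) (packL : PackL E m)
    (τ : Fml) (hτ : IsPi m τ) (c j : ℕ) (hcj : c ≠ j) (s0 s1 ℓ : ℕ)
    (h01 : s0 ≠ s1) (h0l : s0 ≠ ℓ) (h1l : s1 ≠ ℓ) (v : ℕ → M) :
    ∃ (Φ : Fml) (e : M), IsPi m Φ ∧ Φ.fv ⊆ {s0, s1, ℓ} ∧
      (j ∉ τ.fv → Φ.fv ⊆ {s0, ℓ}) ∧
      ∀ (u : ℕ → M) (x y : M), u s0 = x → u s1 = y → u ℓ = e →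
        (Sat E u Φ ↔ Sat E (Function.update (Function.update v c x) j y) τ) := by
  classical
  set K : List ℕ := ((Fml.fv_finite τ).toFinset \ {c, j}).toList with hK
  have hKnd : K.Nodup := Finset.nodup_toList _
  have hKmem : ∀ p, p ∈ K ↔ p ∈ τ.fv ∧ p ≠ c ∧ p ≠ j := by
    intro p
    simp [hK, Finset.mem_sdiff, Set.Finite.mem_toFinset]
  have hcK : c ∉ K := fun h => ((hKmem c).1 h).2.1 rfl
  have hjK : j ∉ K := fun h => ((hKmem j).1 h).2.2 rfl
  rcases perm_exists3 c j s0 s1 hcj h01 {ℓ} (Set.finite_singleton _) K hKnd hcK hjK with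
    ⟨π, hπc, hπj, hπK⟩
  set τh := τ.rename π with hτh
  have hτh1 : IsPi m τh := IsPi.rename_ π.injective hτ
  have hfvτh : τh.fv = π '' τ.fv := Fml.fv_rename π.injective τ
  set L : List ℕ := K.map π with hL
  have hLnd : L.Nodup := hKnd.map π.injective
  have hlL : ℓ ∉ L := by
    intro h
    rcases List.mem_map.1 h with ⟨p, hp, hpe⟩
    exact (hπK p hp).1 (by simp [hpe])
  have hlτh : ℓ ∉ τh.fv := by
    rw [hfvτh]
    rintro ⟨k, hk, hkl⟩
    rcases eq_or_ne k c with rfl | hkc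
    · rw [hπc] at hkl; exact h0l hkl
    rcases eq_or_ne k j with rfl | hkj
    · rw [hπj] at hkl; exact h1l hkl
    · exact (hπK k ((hKmem k).2 ⟨hk, hkc, hkj⟩)).1 (by simp [hkl])
  rcases packL L hLnd ℓ hlL τh hτh1 hlτh with ⟨Φ, hΦ1, hΦ2, hΦ3⟩
  rcases codes_exists' hM (K.map v) with ⟨e, he⟩
  have hKfv : ∀ p ∈ K, p ∈ τ.fv ∧ p ≠ c ∧ p ≠ j := fun p hp => (hKmem p).1 hp
  have hsub : Φ.fv ⊆ {s0, s1, ℓ} := by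
    intro k hk
    rcases hΦ2 hk with ⟨hk1, hk2⟩ | hk1
    · rw [hfvτh] at hk1
      rcases hk1 with ⟨p, hp, rfl⟩
      rcases eq_or_ne p c with rfl | hpc
      · left; exact hπc
      rcases eq_or_ne p j with rfl | hpj
      · right; left; exact hπj
      · exfalso
        refine hk2 ?_
        simp only [hL, Set.mem_setOf_eq]
        exact List.mem_map.2 ⟨p, (hKmem p).2 ⟨hp, hpc, hpj⟩, rfl⟩
    · right; right; exact hk1
  refine ⟨Φ, e, hΦ1, hsub, ?_, ?_⟩
  · intro hjτ k hk
    rcases hΦ2 hk with ⟨hk1, hk2⟩ | hk1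
    · rw [hfvτh] at hk1
      rcases hk1 with ⟨p, hp, rfl⟩
      rcases eq_or_ne p c with rfl | hpc
      · left; exact hπc
      · have hpj : p ≠ j := fun h => hjτ (h ▸ hp)
        exfalso
        refine hk2 ?_
        simp only [hL, Set.mem_setOf_eq]
        exact List.mem_map.2 ⟨p, (hKmem p).2 ⟨hp, hpc, hpj⟩, rfl⟩
    · right; exact hk1
  · intro u x y hu0 hu1 hul
    set w : ℕ → M := fun k => if k = s0 then x else if k = s1 then y else if k = ℓ then e
      else v (π.symm k) with hw
    have hws0 : w s0 = x := by simp [hw]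
    have hws1 : w s1 = y := by simp [hw, Ne.symm h01]
    have hwl : w ℓ = e := by simp [hw, Ne.symm h0l, Ne.symm h1l]
    have hwother : ∀ k, k ≠ s0 → k ≠ s1 → k ≠ ℓ → w k = v (π.symm k) := by
      intro k h1 h2 h3
      simp [hw, h1, h2, h3]
    have step1 : Sat E u Φ ↔ Sat E w Φ := by
      refine sat_agree Φ u w fun k hk => ?_
      rcases hsub hk with rfl | rfl | rfl
      · rw [hws0, hu0]
      · rw [hws1, hu1]
      · rw [hwl, hul]
    have step2 : Codes E (w ℓ) (L.map w) := by
      have hmap : L.map w = K.map v := by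
        rw [hL, List.map_map]
        refine List.map_congr_left fun p hp => ?_
        have h3 := hπK p hp
        have hne : π p ≠ ℓ := fun h => h3.1 (by simp [h])
        show w (π p) = v p
        rw [hwother (π p) h3.2.1 h3.2.2 hne, Equiv.symm_apply_apply]
      rw [hwl, hmap]
      exact he
    have step3 : Sat E w Φ ↔ Sat E w τh := hΦ3 w step2
    have step4 : Sat E w τh ↔ Sat E (w ∘ π) τ := sat_rename π.injective τ w
    have step5 : Sat E (w ∘ π) τ ↔
        Sat E (Function.update (Function.update v c x) j y) τ := by
      refine sat_agree τ _ _ fun k hk => ?_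
      rcases eq_or_ne k c with rfl | hkc
      · show w (π k) = _
        rw [hπc, hws0, Function.update_of_ne hcj, Function.update_self]
      rcases eq_or_ne k j with rfl | hkj
      · show w (π k) = _
        rw [hπj, hws1, Function.update_self]
      · have hpK : k ∈ K := (hKmem k).2 ⟨hk, hkc, hkj⟩
        have h3 := hπK k hpK
        have hne : π k ≠ ℓ := fun h => h3.1 (by simp [h])
        show w (π k) = _
        rw [hwother (π k) h3.2.1 h3.2.2 hne, Equiv.symm_apply_apply,
          Function.update_of_ne hkj, Function.update_of_ne hkc]
    exact step1.trans (step3.trans (step4.trans step5))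

lemma semCollPi [Nonempty M] {n m : ℕ} (hM : SatDB0 E)
    (HColl : CollScheme E (IsSigma (n+1))) (hm : m ≤ n) (packL : PackL E m)
    (τ : Fml) (hτ : IsPi m τ) (c j : ℕ) (hcj : c ≠ j) (v : ℕ → M) (t : M)
    (htot : ∀ x, E x t → ∃ w, Sat E (Function.update (Function.update v c x) j w) τ) :
    ∃ q, ∀ x, E x t → ∃ w, E w q ∧ Sat E (Function.update (Function.update v c x) j w) τ := by
  rcases genInstance2 hM packL τ hτ c j hcj 0 1 2 (by omega) (by omega) (by omega) v with
    ⟨Φ₀, e, h1, h2, -, spec⟩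
  rcases ((Df.of_formula (E := E) h1).pi_to_sigma_succ (Fml.fv_finite _)).lift_sigma
    (by omega : m + 1 ≤ n + 1) (Fml.fv_finite _) with ⟨Φ, hΦ1, hΦ2, hΦ3⟩
  have key : ∀ x y : M, Sat E (val3 x y e) Φ ↔
      Sat E (Function.update (Function.update v c x) j y) τ := by
    intro x y
    rw [hΦ3]
    exact spec (val3 x y e) x y rfl rfl rfl
  rcases HColl Φ hΦ1 (hΦ2.trans h2) e t (fun x hx => by
    rcases htot x hx with ⟨w, hw⟩; exact ⟨w, (key x w).2 hw⟩) with ⟨q, hq⟩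
  refine ⟨q, fun x hx => ?_⟩
  rcases hq x hx with ⟨y, hy1, hy2⟩
  exact ⟨y, hy1, (key x y).1 hy2⟩

lemma semCollSPi [Nonempty M] {n m : ℕ} (hM : SatDB0 E)
    (HCS : CollSScheme E (IsSigma (n+1))) (hm : m ≤ n) (packL : PackL E m)
    (τ : Fml) (hτ : IsPi m τ) (c j : ℕ) (hcj : c ≠ j) (v : ℕ → M) (t : M) :
    ∃ q, ∀ x, E x t →
      ((∃ w, Sat E (Function.update (Function.update v c x) j w) τ) ↔
        ∃ w, E w q ∧ Sat E (Function.update (Function.update v c x) j w) τ) := by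
  rcases genInstance2 hM packL τ hτ c j hcj 0 1 2 (by omega) (by omega) (by omega) v with
    ⟨Φ₀, e, h1, h2, -, spec⟩
  rcases ((Df.of_formula (E := E) h1).pi_to_sigma_succ (Fml.fv_finite _)).lift_sigma
    (by omega : m + 1 ≤ n + 1) (Fml.fv_finite _) with ⟨Φ, hΦ1, hΦ2, hΦ3⟩
  have key : ∀ x y : M, Sat E (val3 x y e) Φ ↔
      Sat E (Function.update (Function.update v c x) j y) τ := by
    intro x y
    rw [hΦ3]
    exact spec (val3 x y e) x y rfl rfl rfl
  rcases HCS Φ hΦ1 (hΦ2.trans h2) e t with ⟨q, hq⟩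
  refine ⟨q, fun x hx => ?_⟩
  have h := hq x hx
  constructor
  · rintro ⟨w, hw⟩
    rcases h.1 ⟨w, (key x w).2 hw⟩ with ⟨y, hy1, hy2⟩
    exact ⟨y, hy1, (key x y).1 hy2⟩
  · rintro ⟨w, hw1, hw2⟩
    exact ⟨w, hw2⟩

lemma sepD_delta0 [Nonempty M] (hM : SatDB0 E) (packL : PackL E 0) (τ : Fml)
    (hτ : IsDelta0 τ) (c : ℕ) (v : ℕ → M) (p : M) :
    ∃ q, ∀ x, E x q ↔ (E x p ∧ Sat E (Function.update v c x) τ) := by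
  rcases Fml.fresh_exists ((Fml.fv_finite τ).union (Set.finite_singleton c)) with ⟨j, hj⟩
  have hjτ : j ∉ τ.fv := fun h => hj (Or.inl h)
  have hcj : c ≠ j := fun h => hj (Or.inr (by simp [h]))
  rcases genInstance2 hM packL τ (show IsPi 0 τ from hτ) c j hcj 0 2 1
    (by omega) (by omega) (by omega) v with ⟨Φ, e, h1, -, h2', spec⟩
  have hfv : Φ.fv ⊆ {0, 1} := h2' hjτ
  rcases hM.2.2.2.2.2 Φ (show IsDelta0 Φ from h1) hfv e p with ⟨q, hq⟩
  refine ⟨q, fun x => (hq x).trans (and_congr_right fun _ => ?_)⟩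
  have hu := spec (val2 x e) x (val2 x e 2) rfl rfl rfl
  exact hu.trans (sat_update_dummy hjτ _ _)

lemma sepSigmaD [Nonempty M] {n : ℕ} (hM : SatDB0 E) (HS : SepScheme E (IsSigma (n+1)))
    (packL : PackL E n) (φ : Fml) (hφ : IsSigma (n+1) φ) (c : ℕ) (v : ℕ → M) (p : M) :
    ∃ q, ∀ x, E x q ↔ (E x p ∧ Sat E (Function.update v c x) φ) := by
  rcases hφ with ⟨i, ψ, hψ, rfl⟩
  rcases alpha_ex (E := E) ψ hψ i {c} (Set.finite_singleton c) with
    ⟨i', ψ', hi'c, hψ', hfv', hequiv, -⟩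
  have hci' : c ≠ i' := fun h => hi'c (by simp [h.symm])
  rcases genInstance2 hM packL ψ' hψ' c i' hci' 0 2 1 (by omega) (by omega) (by omega) v with
    ⟨Φ₀, e, h1, h2, -, spec⟩
  have hΦ : IsSigma (n+1) (Fml.ex 2 Φ₀) := ⟨2, Φ₀, h1, rfl⟩
  have hfv : (Fml.ex 2 Φ₀).fv ⊆ {0, 1} := by
    rintro k ⟨hk1, hk2⟩
    have hk2' : k ≠ 2 := by simpa using hk2
    rcases h2 hk1 with h | h | h
    · exact Or.inl h
    · exact absurd h hk2'
    · exact Or.inr h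
  rcases HS _ hΦ hfv e p with ⟨q, hq⟩
  refine ⟨q, fun x => (hq x).trans (and_congr_right fun _ => ?_)⟩
  rw [← hequiv (Function.update v c x)]
  simp only [sat_ex]
  refine exists_congr fun w => ?_
  have h0 : Function.update (val2 x e) 2 w 0 = x :=
    Function.update_of_ne (by omega) _ _
  have h2' : Function.update (val2 x e) 2 w 2 = w := Function.update_self _ _ _
  have h1' : Function.update (val2 x e) 2 w 1 = e :=
    Function.update_of_ne (by omega) _ _
  exact spec (Function.update (val2 x e) 2 w) x w h0 h2' h1'

lemma packOne [Nonempty M] {m : ℕ} (hS : AbsS E m) (φ : Fml) (hφ : IsPi m φ)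
    (i j l : ℕ) (hij : i ≠ j) (hli : l ≠ i) (hlj : l ≠ j) :
    Df E (IsPi m) ((φ.fv \ {i, j}) ∪ {l})
      (fun v => ∀ a b, IsOPairOf E (v l) a b →
        Sat E (Function.update (Function.update v i a) j b) φ) := by
  rcases Fml.fresh_exists ((Fml.fv_finite φ).union ((Set.finite_singleton l).insert i |>.insert j))
    with ⟨S, hSmem⟩
  rcases Fml.fresh_exists (((Fml.fv_finite φ).union
    ((Set.finite_singleton l).insert i |>.insert j)).insert S) with ⟨T, hTmem⟩
  have hSf : S ∉ φ.fv := fun h => hSmem (Or.inl h)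
  have hSj : S ≠ j := fun h => hSmem (Or.inr (by simp [h]))
  have hSi : S ≠ i := fun h => hSmem (Or.inr (by simp [h]))
  have hSl : S ≠ l := fun h => hSmem (Or.inr (by simp [h]))
  have hTS : T ≠ S := fun h => hTmem (by simp [h])
  have hTf : T ∉ φ.fv := fun h => hTmem (Or.inr (Or.inl h))
  have hTj : T ≠ j := fun h => hTmem (Or.inr (Or.inr (by simp [h])))
  have hTi : T ≠ i := fun h => hTmem (Or.inr (Or.inr (by simp [h])))
  have hTl : T ≠ l := fun h => hTmem (Or.inr (Or.inr (by simp [h])))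
  have D1 := (Df.of_formula (E := E) hφ).imp_delta_pi
    (df_isOPair i j l (Ne.symm hli) (Ne.symm hlj))
  have B1 := dfBallP hS D1 j T (Ne.symm hTj)
  have B2 := dfBallP hS B1 T l hTl
  have B3 := dfBallP hS B2 i S (Ne.symm hSi)
  have B4 := dfBallP hS B3 S l hSl
  refine (B4.mono ?_).congr fun v => ?_
  · intro k hk
    simp only [Set.mem_union, Set.mem_diff, Set.mem_insert_iff, Set.mem_singleton_iff] at hk ⊢
    tauto
  · have el : ∀ (s' a t' b : M), Function.update (Function.update (Function.update
        (Function.update v S s') i a) T t') j b l = v l := by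
      intro s' a t' b
      simp only [Function.update_apply, if_neg hlj, if_neg (Ne.symm hTl), if_neg hli,
        if_neg (Ne.symm hSl)]
    have ei : ∀ (s' a t' b : M), Function.update (Function.update (Function.update
        (Function.update v S s') i a) T t') j b i = a := by
      intro s' a t' b
      simp only [Function.update_apply, if_neg hij, if_neg (Ne.symm hTi), if_pos rfl, if_true]
    have ej : ∀ (s' a t' b : M), Function.update (Function.update (Function.update
        (Function.update v S s') i a) T t') j b j = b := by
      intro s' a t' b
      simp only [Function.update_apply, if_pos rfl, if_true]
    have agr : ∀ (s' a t' b : M), Sat E (Function.update (Function.update (Function.update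
        (Function.update v S s') i a) T t') j b) φ ↔
        Sat E (Function.update (Function.update v i a) j b) φ := by
      intro s' a t' b
      refine sat_agree φ _ _ fun k hk => ?_
      have h1 : k ≠ T := fun h => hTf (h ▸ hk)
      have h2 : k ≠ S := fun h => hSf (h ▸ hk)
      simp only [Function.update_apply, if_neg h1, if_neg h2]
    constructor
    · intro H a b hop
      obtain ⟨s', t', hps, hpt, hpz⟩ := hop
      have h1 : E s' (v l) := (hpz s').2 (Or.inl rfl)
      have h2 : E a s' := (hps a).2 (Or.inl rfl)
      have h3 : E t' (v l) := (hpz t').2 (Or.inr rfl)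
      have h4 : E b t' := (hpt b).2 (Or.inr rfl)
      have H1 := H s' h1
      have H2 := H1 a (by rw [Function.update_self]; exact h2)
      have H3 := H2 t' (by
        rw [Function.update_of_ne hli, Function.update_of_ne (Ne.symm hSl)]
        exact h3)
      have H4 := H3 b (by rw [Function.update_self]; exact h4)
      have HS := H4 (by
        rw [el s' a t' b, ei s' a t' b, ej s' a t' b]
        exact ⟨s', t', hps, hpt, hpz⟩)
      exact (agr s' a t' b).1 HS
    · intro H s' hs1 a ha t' ht1 b hb hop
      rw [el s' a t' b, ei s' a t' b, ej s' a t' b] at hop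
      exact (agr s' a t' b).2 (H a b hop)

lemma packL_of [Nonempty M] {m : ℕ} (hS : AbsS E m) : PackL E m := by
  intro L
  induction L with
  | nil =>
      intro _ ℓ _ φ hφ _
      exact ⟨φ, hφ, fun k hk => Or.inl ⟨hk, by simp⟩, fun v _ => Iff.rfl⟩
  | cons i rest ih =>
      intro hnd ℓ hℓ φ hφ hℓφ
      have hℓi : ℓ ≠ i := fun h => hℓ (by simp [h])
      have hℓrest : ℓ ∉ rest := fun h => hℓ (List.mem_cons_of_mem _ h)
      simp only [List.nodup_cons] at hnd
      cases rest with
      | nil =>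
          refine ⟨φ.rename (Equiv.swap i ℓ), IsPi.rename_ (Equiv.swap i ℓ).injective hφ,
            ?_, fun v hc => ?_⟩
          · refine (fv_swap_subset hℓφ).trans ?_
            intro k hk
            rcases hk with ⟨hk1, hk2⟩ | hk1
            · exact Or.inl ⟨hk1, by simpa using hk2⟩
            · exact Or.inr hk1
          · have hvi : v ℓ = v i := hc
            rw [sat_rename (Equiv.swap i ℓ).injective]
            refine sat_agree φ _ _ fun k hk => ?_
            rcases eq_or_ne k i with rfl | hki
            · simp only [Function.comp_apply, Equiv.swap_apply_left]
              exact hvi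
            · have hkℓ : k ≠ ℓ := fun h => hℓφ (h ▸ hk)
              simp only [Function.comp_apply, Equiv.swap_apply_of_ne_of_ne hki hkℓ]
      | cons i2 rest2 =>
          rcases Fml.fresh_exists (((Fml.fv_finite φ).union
            ((i :: i2 :: rest2).finite_toSet)).insert ℓ) with ⟨h, hhmem⟩
          have hhℓ : h ≠ ℓ := fun he => hhmem (by simp [he])
          have hhφ : h ∉ φ.fv := fun he => hhmem (Or.inr (Or.inl he))
          have hhL : h ∉ (i :: i2 :: rest2) := fun he => hhmem (Or.inr (Or.inr (by simpa using he)))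
          have hhi : h ≠ i := fun he => hhL (by simp [he])
          have hhrest : h ∉ (i2 :: rest2) := fun he => hhL (List.mem_cons_of_mem _ he)
          rcases ih hnd.2 h hhrest φ hφ hhφ with ⟨φ₁, hφ₁, hfv₁, hsem₁⟩
          have hiφ₁? : True := trivial
          rcases packOne hS φ₁ hφ₁ i h ℓ (Ne.symm hhi) hℓi (Ne.symm hhℓ) with ⟨φ', hφ', hfv', hsem'⟩
          refine ⟨φ', hφ', ?_, fun v hc => ?_⟩
          · intro k hk
            rcases hfv' hk with ⟨hk1, hk2⟩ | hk1
            · rcases hfv₁ hk1 with ⟨hk3, hk4⟩ | hk3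
              · left
                refine ⟨hk3, ?_⟩
                simp only [Set.mem_setOf_eq, List.mem_cons] at hk4 ⊢
                simp only [Set.mem_insert_iff, Set.mem_singleton_iff] at hk2
                tauto
              · exact absurd (Set.mem_insert_iff.2 (Or.inr hk3)) hk2
            · exact Or.inr hk1
          · -- hc : Codes E (v ℓ) ((i :: i2 :: rest2).map v)
            obtain ⟨e', hpair, hcode⟩ := hc
            have key := hsem' v
            rw [key]
            constructor
            · intro H
              have H1 := H (v i) e' hpair
              rw [Function.update_eq_self] at H1
              -- H1 : Sat (update v h e') φ₁
              have hc1 : Codes E (Function.update v h e' h) ((i2 :: rest2).map (Function.update v h e')) := by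
                rw [Function.update_self]
                have : (i2 :: rest2).map (Function.update v h e') = (i2 :: rest2).map v := by
                  refine List.map_congr_left fun p hp => ?_
                  exact Function.update_of_ne (fun he => hhrest (by rw [← he]; exact hp)) _ _
                rw [this]
                exact hcode
              have := (hsem₁ _ hc1).1 H1
              exact (sat_update_dummy hhφ v e').1 this
            · intro H a b hop
              rcases opair_inj hop hpair with ⟨ha', hb'⟩
              rw [ha', hb', Function.update_eq_self]
              have hc1 : Codes E (Function.update v h e' h) ((i2 :: rest2).map (Function.update v h e')) := by
                rw [Function.update_self]
                have : (i2 :: rest2).map (Function.update v h e') = (i2 :: rest2).map v := by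
                  refine List.map_congr_left fun p hp => ?_
                  exact Function.update_of_ne (fun he => hhrest (by rw [← he]; exact hp)) _ _
                rw [this]
                exact hcode
              exact (hsem₁ _ hc1).2 ((sat_update_dummy hhφ v e').2 H)

lemma bundle [Nonempty M] {n : ℕ} (hM : SatDB0 E) (HColl : CollScheme E (IsSigma (n+1))) :
    ∀ m : ℕ, m ≤ n + 1 → AbsS E m ∧ AbsP E m := by
  intro m
  induction m with
  | zero =>
      intro _
      constructor
      · intro φ hφ c d hcd
        exact (Df.of_formula (E := E) (show IsDelta0 φ from hφ)).bex_d0 c d hcd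
      · intro φ hφ c d hcd
        exact (Df.of_formula (E := E) (show IsDelta0 φ from hφ)).bex_d0 c d hcd
  | succ k ih =>
      intro hm
      obtain ⟨habsSk, habsPk⟩ := ih (by omega)
      have packLk : PackL E k := packL_of habsSk
      constructor
      · -- AbsS (k+1)
        intro φ hφ c d hcd
        rcases isSigma_succ.1 hφ with ⟨i, ψ, hψ, rfl⟩
        rcases alpha_ex (E := E) ψ hψ i {c, d} ((Set.finite_singleton d).insert c) with
          ⟨i', ψ', hi', hψ', hfv', hequiv, -⟩
        have hi'c : i' ≠ c := fun h => hi' (by simp [h])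
        have hi'd : i' ≠ d := fun h => hi' (by simp [h])
        have D := dfBexP habsPk (Df.of_formula (E := E) hψ') c d hcd
        have D2 := D.exI i'
        refine (D2.mono ?_).congr fun v => ?_
        · intro x hx
          rcases hx with ⟨hx1, hx2⟩
          have hx2' : x ≠ i' := by simpa using hx2
          rcases hx1 with ⟨hx3, hx4⟩ | hx3
          · rcases hfv' hx3 with h5 | h5
            · exact Or.inl ⟨h5, hx4⟩
            · exact absurd (by simpa using h5) hx2'
          · exact Or.inr hx3
        · constructor
          · rintro ⟨w, a, ha, hsat⟩
            rw [Function.update_of_ne (Ne.symm hi'd)] at ha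
            refine ⟨a, ha, ?_⟩
            rw [← hequiv (Function.update v c a)]
            simp only [sat_ex]
            refine ⟨w, ?_⟩
            rwa [Function.update_comm hi'c] at hsat
          · rintro ⟨a, ha, hsat⟩
            rw [← hequiv (Function.update v c a)] at hsat
            simp only [sat_ex] at hsat
            rcases hsat with ⟨w, hw⟩
            refine ⟨w, a, ?_, ?_⟩
            · rwa [Function.update_of_ne (Ne.symm hi'd)]
            · rwa [Function.update_comm hi'c]
      · -- AbsP (k+1)
        intro φ hφ c d hcd
        rcases isPi_succ.1 hφ with ⟨j, σ, hσ, rfl⟩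
        rcases alpha_all (E := E) σ hσ j {c, d} ((Set.finite_singleton d).insert c) with
          ⟨j', σ', hj', hσ', hfvσ', hequivA⟩
        have hj'c : j' ≠ c := fun h => hj' (by simp [h])
        have hj'd : j' ≠ d := fun h => hj' (by simp [h])
        rcases Fml.fresh_exists ((Fml.fv_finite σ').union
          (((Set.finite_singleton j').insert d).insert c)) with ⟨B, hB⟩
        have hBσ' : B ∉ σ'.fv := fun h => hB (Or.inl h)
        have hBc : B ≠ c := fun h => hB (Or.inr (by simp [h]))
        have hBd : B ≠ d := fun h => hB (Or.inr (by simp [h]))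
        have hBj' : B ≠ j' := fun h => hB (Or.inr (by simp [h]))
        have S2 := dfBallS habsPk (Df.of_formula (E := E) hσ') j' B (Ne.symm hBj')
        have S3 := dfBexS habsSk S2 c d hcd
        have S4 := S3.allI B
        refine (S4.mono ?_).congr fun v => ?_
        · intro x hx
          rcases hx with ⟨hx1, hx2⟩
          have hx2' : x ≠ B := by simpa using hx2
          rcases hx1 with ⟨hx3, hx4⟩ | hx3
          · rcases hx3 with ⟨hx5, hx6⟩ | hx5
            · rcases hfvσ' hx5 with h7 | h7
              · exact Or.inl ⟨h7, hx4⟩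
              · exact absurd (by simpa using h7) (by simpa using hx6)
            · exact absurd (by simpa using hx5) hx2'
          · exact Or.inr hx3
        · have ev1 : ∀ Bv : M, Function.update v B Bv d = v d := fun Bv =>
            Function.update_of_ne (Ne.symm hBd) _ _
          have ev2 : ∀ (Bv a : M), Function.update (Function.update v B Bv) c a B = Bv :=
            fun Bv a => by rw [Function.update_of_ne hBc, Function.update_self]
          have agr : ∀ (Bv a w : M),
              Sat E (Function.update (Function.update (Function.update v B Bv) c a) j' w) σ' ↔
              Sat E (Function.update (Function.update v c a) j' w) σ' := by
            intro Bv a w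
            refine sat_agree σ' _ _ fun x hx => ?_
            have hxB : x ≠ B := fun h => hBσ' (h ▸ hx)
            simp only [Function.update_apply, if_neg hxB]
          constructor
          · intro H
            by_contra hcon
            push_neg at hcon
            have hcon' : ∀ x, E x (v d) → ∃ w, ¬ Sat E
                (Function.update (Function.update v c x) j' w) σ' := by
              intro x hx
              have h1 := hcon x hx
              simp only [sat_all] at h1
              by_contra h2
              push_neg at h2
              exact h1 ((hequivA (Function.update v c x)).1 h2)
            rcases (Df.of_formula (E := E) hσ').neg_sigma with ⟨ρ, hρ1, hρ2, hρ3⟩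
            have htot : ∀ x, E x (v d) → ∃ w, Sat E
                (Function.update (Function.update v c x) j' w) ρ := by
              intro x hx
              rcases hcon' x hx with ⟨w, hw⟩
              exact ⟨w, (hρ3 _).2 hw⟩
            rcases semCollPi hM HColl (by omega : k ≤ n) packLk ρ hρ1 c j' (Ne.symm hj'c)
              v (v d) htot with ⟨q, hq⟩
            rcases H q with ⟨a, ha, hall⟩
            rw [ev1 q] at ha
            rcases hq a ha with ⟨w, hwq, hρw⟩
            have hsat := hall w (by rw [ev2 q a]; exact hwq)
            exact (hρ3 _).1 hρw ((agr q a w).1 hsat)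
          · rintro ⟨a, ha, hsat⟩ Bv
            refine ⟨a, by rw [ev1 Bv]; exact ha, fun w hw => ?_⟩
            refine (agr Bv a w).2 ?_
            simp only [sat_all] at hsat
            exact (hequivA (Function.update v c a)).2 hsat w

lemma val3_eq (x y v : M) :
    val3 x y v = Function.update (Function.update (fun _ => v) 0 x) 1 y := by
  funext k
  rcases eq_or_ne k 0 with rfl | h0
  · simp [val3]
  rcases eq_or_ne k 1 with rfl | h1
  · simp [val3]
  · simp [val3, h0, h1, Function.update_of_ne h0, Function.update_of_ne h1]

lemma val2_eq (x v : M) : val2 x v = Function.update (fun _ => v) 0 x := by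
  funext k
  rcases eq_or_ne k 0 with rfl | h0
  · simp [val2]
  · simp [val2, h0, Function.update_of_ne h0]

lemma collScheme_of_collS {Γ : Fml → Prop} (h : CollSScheme E Γ) : CollScheme E Γ := by
  intro φ hφ hfv v p htot
  rcases h φ hφ hfv v p with ⟨q, hq⟩
  exact ⟨q, fun x hx => (hq x hx).1 (htot x hx)⟩

lemma collS_descend [Nonempty M] {n m : ℕ} (hm : m ≤ n)
    (h : CollSScheme E (IsSigma (n+1))) : CollSScheme E (IsSigma (m+1)) := by
  intro φ hφ hfv v p
  rcases (Df.of_formula (E := E) hφ).lift_sigma (by omega : m + 1 ≤ n + 1)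
    (Fml.fv_finite _) with ⟨φ', h1, h2, h3⟩
  rcases h φ' h1 (h2.trans hfv) v p with ⟨q, hq⟩
  refine ⟨q, fun x hx => ?_⟩
  have := hq x hx
  constructor
  · rintro ⟨y, hy⟩
    rcases this.1 ⟨y, (h3 _).2 hy⟩ with ⟨y', hy1, hy2⟩
    exact ⟨y', hy1, (h3 _).1 hy2⟩
  · rintro ⟨y, hy1, hy2⟩
    exact ⟨y, hy2⟩

/-- Pair contraction: a Π_m formula expressing `∃ y a, u W = ⟨y,a⟩ ∧ ψ(y at 1, a at i)`. -/
lemma contraction [Nonempty M] {m : ℕ} (habsP : AbsP E m) (ψ : Fml) (hψ : IsPi m ψ)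
    (i W : ℕ) (hi1 : i ≠ 1) (hW1 : W ≠ 1) (hWi : W ≠ i) (hWψ : W ∉ ψ.fv) :
    ∃ χ, IsPi m χ ∧ χ.fv ⊆ (ψ.fv \ {1, i}) ∪ {W} ∧
      ∀ u : ℕ → M, Sat E u χ ↔ ∃ y a, IsOPairOf E (u W) y a ∧
        Sat E (Function.update (Function.update u 1 y) i a) ψ := by
  rcases Fml.fresh_exists ((Fml.fv_finite ψ).union
    (((Set.finite_singleton W).insert i).insert 1)) with ⟨S, hSm⟩
  rcases Fml.fresh_exists (((Fml.fv_finite ψ).union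
    (((Set.finite_singleton W).insert i).insert 1)).insert S) with ⟨T, hTm⟩
  have hSψ : S ∉ ψ.fv := fun h => hSm (Or.inl h)
  have hS1 : S ≠ 1 := fun h => hSm (Or.inr (by simp [h]))
  have hSi : S ≠ i := fun h => hSm (Or.inr (by simp [h]))
  have hSW : S ≠ W := fun h => hSm (Or.inr (by simp [h]))
  have hTS : T ≠ S := fun h => hTm (by simp [h])
  have hTψ : T ∉ ψ.fv := fun h => hTm (Or.inr (Or.inl h))
  have hT1 : T ≠ 1 := fun h => hTm (Or.inr (Or.inr (by simp [h])))
  have hTi : T ≠ i := fun h => hTm (Or.inr (Or.inr (by simp [h])))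
  have hTW : T ≠ W := fun h => hTm (Or.inr (Or.inr (by simp [h])))
  have D := (Df.of_formula (E := E) hψ).and_delta_pi
    (df_isOPair 1 i W hW1.symm (Ne.symm hWi))
  have F1 := dfBexP habsP D i T hTi.symm
  have F2 := dfBexP habsP F1 T W hTW
  have F3 := dfBexP habsP F2 1 S hS1.symm
  have F4 := dfBexP habsP F3 S W hSW
  rcases F4 with ⟨χ, h1, h2, h3⟩
  refine ⟨χ, h1, h2.trans ?_, fun u => (h3 u).trans ?_⟩
  · intro k hk
    simp only [Set.mem_union, Set.mem_diff, Set.mem_insert_iff, Set.mem_singleton_iff] at hk ⊢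
    tauto
  · have eW : ∀ (s y t a : M), Function.update (Function.update (Function.update
        (Function.update u S s) 1 y) T t) i a W = u W := by
      intro s y t a
      simp only [Function.update_apply, if_neg hWi, if_neg (Ne.symm hTW), if_neg hW1,
        if_neg (Ne.symm hSW)]
    have e1 : ∀ (s y t a : M), Function.update (Function.update (Function.update
        (Function.update u S s) 1 y) T t) i a 1 = y := by
      intro s y t a
      simp only [Function.update_apply, if_neg (Ne.symm hi1), if_neg (Ne.symm hT1),
        if_pos rfl, if_true]
    have ei : ∀ (s y t a : M), Function.update (Function.update (Function.update
        (Function.update u S s) 1 y) T t) i a i = a := fun _ _ _ _ =>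
      Function.update_self _ _ _
    have agr : ∀ (s y t a : M), Sat E (Function.update (Function.update (Function.update
        (Function.update u S s) 1 y) T t) i a) ψ ↔
        Sat E (Function.update (Function.update u 1 y) i a) ψ := by
      intro s y t a
      refine sat_agree ψ _ _ fun k hk => ?_
      have hkS : k ≠ S := fun h => hSψ (h ▸ hk)
      have hkT : k ≠ T := fun h => hTψ (h ▸ hk)
      simp only [Function.update_apply, if_neg hkS, if_neg hkT]
    constructor
    · rintro ⟨s, hs, y, hy, t, ht, a, ha, hsat, hop⟩
      rw [eW s y t a, e1 s y t a, ei s y t a] at hop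
      exact ⟨y, a, hop, (agr s y t a).1 hsat⟩
    · rintro ⟨y, a, hop, hsat⟩
      obtain ⟨s0, t0, hps, hpt, hpz⟩ := hop
      refine ⟨s0, (hpz s0).2 (Or.inl rfl), y, ?_, t0, ?_, a, ?_, ?_, ?_⟩
      · rw [Function.update_self]
        exact (hps y).2 (Or.inl rfl)
      · rw [Function.update_of_ne hW1, Function.update_of_ne (Ne.symm hSW)]
        exact (hpz t0).2 (Or.inr rfl)
      · rw [Function.update_self]
        exact (hpt a).2 (Or.inr rfl)
      · exact (agr s0 y t0 a).2 hsat
      · rw [eW s0 y t0 a, e1 s0 y t0 a, ei s0 y t0 a]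
        exact ⟨s0, t0, hps, hpt, hpz⟩

lemma mainSepD [Nonempty M] {n : ℕ} (hM : SatDB0 E) (HCS : CollSScheme E (IsSigma (n+1)))
    (sepPi : ∀ ρ, IsPi n ρ → ∀ (c : ℕ) (v : ℕ → M) (p : M),
      ∃ q, ∀ x, E x q ↔ (E x p ∧ Sat E (Function.update v c x) ρ)) :
    ∀ φ, IsSigma (n+1) φ → ∀ (c : ℕ) (v : ℕ → M) (p : M),
      ∃ q, ∀ x, E x q ↔ (E x p ∧ Sat E (Function.update v c x) φ) := by
  intro φ hφ c v p
  have HColl := collScheme_of_collS HCS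
  have habs := bundle hM HColl
  have packLn : PackL E n := packL_of (habs n (by omega)).1
  rcases hφ with ⟨i, ψ, hψ, rfl⟩
  rcases alpha_ex (E := E) ψ hψ i {c} (Set.finite_singleton c) with
    ⟨i', ψ', hi', hψ', hfv', hequiv, -⟩
  have hci' : c ≠ i' := fun h => hi' (by simp [h.symm])
  obtain ⟨q0, hq0⟩ := semCollSPi hM HCS le_rfl packLn ψ' hψ' c i' hci' v p
  rcases Fml.fresh_exists ((Fml.fv_finite ψ').union
    ((Set.finite_singleton i').insert c)) with ⟨d, hd⟩
  have hdψ' : d ∉ ψ'.fv := fun h => hd (Or.inl h)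
  have hdc : d ≠ c := fun h => hd (Or.inr (by simp [h]))
  have hdi' : d ≠ i' := fun h => hd (Or.inr (by simp [h]))
  have D := dfBexP (habs n (by omega)).2 (Df.of_formula (E := E) hψ') i' d (Ne.symm hdi')
  rcases D with ⟨χ, hχ1, hχ2, hχ3⟩
  rcases sepPi χ hχ1 c (Function.update v d q0) p with ⟨q, hq⟩
  refine ⟨q, fun x => (hq x).trans (and_congr_right fun hxp => ?_)⟩
  refine (hχ3 _).trans ?_
  show (∃ w, E w (Function.update (Function.update v d q0) c x d) ∧
    Sat E (Function.update (Function.update (Function.update v d q0) c x) i' w) ψ') ↔ _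
  have ed : Function.update (Function.update v d q0) c x d = q0 := by
    rw [Function.update_of_ne hdc, Function.update_self]
  have agr : ∀ w, Sat E (Function.update (Function.update (Function.update v d q0) c x) i' w) ψ'
      ↔ Sat E (Function.update (Function.update v c x) i' w) ψ' := by
    intro w
    refine sat_agree ψ' _ _ fun k hk => ?_
    have hkd : k ≠ d := fun h => hdψ' (h ▸ hk)
    simp only [Function.update_apply, if_neg hkd]
  rw [ed]
  constructor
  · rintro ⟨w, hwq0, hsat⟩
    rw [← hequiv (Function.update v c x)]
    simp only [sat_ex]
    exact ⟨w, (agr w).1 hsat⟩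
  · intro hsat
    rw [← hequiv (Function.update v c x)] at hsat
    simp only [sat_ex] at hsat
    rcases (hq0 x hxp).1 hsat with ⟨w, hw1, hw2⟩
    exact ⟨w, hw1, (agr w).2 hw2⟩

lemma sepD_main : ∀ (n : ℕ) (N : Type) (F : N → N → Prop), SatDB0 F →
    CollSScheme F (IsSigma (n+1)) →
    ∀ φ, IsSigma (n+1) φ → ∀ (c : ℕ) (v : ℕ → N) (p : N),
      ∃ q, ∀ x, F x q ↔ (F x p ∧ Sat F (Function.update v c x) φ) := by
  intro n
  induction n with
  | zero =>
      intro N F hM HCS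
      have hne : Nonempty N := db0_nonempty hM
      have habs := bundle hM (collScheme_of_collS HCS)
      exact mainSepD hM HCS fun ρ hρ => sepD_delta0 hM (packL_of (habs 0 (by omega)).1) ρ hρ
  | succ n ih =>
      intro N F hM HCS
      have hne : Nonempty N := db0_nonempty hM
      have habs := bundle hM (collScheme_of_collS HCS)
      refine mainSepD hM HCS ?_
      intro ρ hρ c v p
      have HCS' := collS_descend (show n ≤ n + 1 by omega) HCS
      have sepS := ih N F hM HCS'
      rcases (Df.of_formula (E := F) (show IsPi (n+1) ρ from hρ)).neg_pi with ⟨ρ', h1, h2, h3⟩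
      rcases sepS ρ' h1 c v p with ⟨q₁, hq₁⟩
      rcases sepD_delta0 hM (packL_of (habs 0 (by omega)).1) ((Fml.mem 0 1).not)
        (IsDelta0.not (.mem 0 1)) 0 (fun _ => q₁) p with ⟨q, hq⟩
      refine ⟨q, fun x => (hq x).trans ?_⟩
      have hx1 : Sat F (Function.update (fun _ => q₁) 0 x) ((Fml.mem 0 1).not) ↔ ¬ F x q₁ := by
        simp only [sat_not, sat_mem, Function.update_self,
          Function.update_of_ne (show (1:ℕ) ≠ 0 by omega)]
      rw [hx1]
      constructor
      · rintro ⟨hxp, hnq⟩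
        refine ⟨hxp, ?_⟩
        by_contra hns
        exact hnq ((hq₁ x).2 ⟨hxp, (h3 _).2 hns⟩)
      · rintro ⟨hxp, hs⟩
        exact ⟨hxp, fun hxq => (h3 _).1 ((hq₁ x).1 hxq).2 hs⟩

lemma collS_of_coll_sep {n : ℕ} (hM : SatDB0 E) (h1 : CollScheme E (IsSigma (n+1)))
    (h2 : SepScheme E (IsSigma (n+1))) : CollSScheme E (IsSigma (n+1)) := by
  have hne : Nonempty M := db0_nonempty hM
  have habs := bundle hM h1
  have packLn : PackL E n := packL_of (habs n (by omega)).1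
  intro φ hφ hfv v p
  rcases hφ with ⟨i, ψ, hψ, rfl⟩
  rcases alpha_ex (E := E) ψ hψ i {1} (Set.finite_singleton 1) with
    ⟨i', ψ', hi', hψ', hfv', hequiv, -⟩
  have hi'1 : i' ≠ 1 := by simpa using hi'
  rcases Fml.fresh_exists ((Fml.fv_finite ψ').union
    ((((Set.finite_singleton i').insert 2).insert 1).insert 0)) with ⟨W, hWm⟩
  have hWψ' : W ∉ ψ'.fv := fun h => hWm (Or.inl h)
  have hW0 : W ≠ 0 := fun h => hWm (Or.inr (by simp [h]))
  have hW1 : W ≠ 1 := fun h => hWm (Or.inr (by simp [h]))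
  have hWi' : W ≠ i' := fun h => hWm (Or.inr (by simp [h]))
  rcases contraction (habs n (by omega)).2 ψ' hψ' i' W hi'1 hW1 hWi' hWψ' with ⟨χ, hχ1, hχ2, hχ3⟩
  have dropW : ∀ (u : ℕ → M) (w y a : M),
      Sat E (Function.update (Function.update (Function.update u W w) 1 y) i' a) ψ' ↔
      Sat E (Function.update (Function.update u 1 y) i' a) ψ' := by
    intro u w y a
    refine sat_agree ψ' _ _ fun k hk => ?_
    have hkW : k ≠ W := fun h => hWψ' (h ▸ hk)
    simp only [Function.update_apply, if_neg hkW]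
  have key : ∀ u : ℕ → M, (∃ w, Sat E (Function.update u W w) χ) ↔
      ∃ y, Sat E (Function.update u 1 y) (.ex i' ψ') := by
    intro u
    constructor
    · rintro ⟨w, hw⟩
      rcases (hχ3 _).1 hw with ⟨y, a, hop, hsat⟩
      refine ⟨y, ?_⟩
      simp only [sat_ex]
      exact ⟨a, (dropW u w y a).1 hsat⟩
    · rintro ⟨y, hy⟩
      simp only [sat_ex] at hy
      rcases hy with ⟨a, ha⟩
      rcases db0_opair hM y a with ⟨w, hw⟩
      refine ⟨w, (hχ3 _).2 ⟨y, a, ?_, ?_⟩⟩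
      · rw [Function.update_self]
        exact hw
      · exact (dropW u w y a).2 ha
  have hΦc : IsSigma (n+1) (Fml.ex W χ) := ⟨W, χ, hχ1, rfl⟩
  rcases sepSigmaD hM h2 packLn (Fml.ex W χ) hΦc 0 (fun _ => v) p with ⟨A, hA⟩
  have hAchar : ∀ x, E x A ↔ (E x p ∧ ∃ y, Sat E (val3 x y v) (.ex i ψ)) := by
    intro x
    rw [hA x]
    refine and_congr_right fun _ => ?_
    rw [sat_ex, key _]
    refine exists_congr fun y => ?_
    rw [val3_eq]
    exact hequiv _
  have htot : ∀ x, E x A → ∃ w,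
      Sat E (Function.update (Function.update (fun _ => v) 0 x) W w) χ := by
    intro x hx
    have := ((hA x).1 hx).2
    simpa only [sat_ex] using this
  rcases semCollPi hM h1 (le_refl n) packLn χ hχ1 0 W (Ne.symm hW0) (fun _ => v) A htot with
    ⟨q1, hq1⟩
  rcases db0_union hM q1 with ⟨U1, hU1⟩
  rcases db0_union hM U1 with ⟨U2, hU2⟩
  refine ⟨U2, fun x hxp => ?_⟩
  constructor
  · rintro ⟨y, hy⟩
    have hxA : E x A := (hAchar x).2 ⟨hxp, y, hy⟩
    rcases hq1 x hxA with ⟨w, hwq1, hχw⟩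
    rcases (hχ3 _).1 hχw with ⟨y', a', hop, hsat⟩
    rw [Function.update_self] at hop
    obtain ⟨s0, t0, hps, hpt, hpz⟩ := hop
    have hyU2 : E y' U2 := by
      have hs0 : E s0 U1 := (hU1 s0).2 ⟨w, hwq1, (hpz s0).2 (Or.inl rfl)⟩
      exact (hU2 y').2 ⟨s0, hs0, (hps y').2 (Or.inl rfl)⟩
    refine ⟨y', hyU2, ?_⟩
    rw [← hequiv (val3 x y' v)]
    simp only [sat_ex]
    refine ⟨a', ?_⟩
    rw [val3_eq]
    exact (dropW (Function.update (fun _ => v) 0 x) w y' a').1 hsat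
  · rintro ⟨y, hyU2, hy⟩
    exact ⟨y, hy⟩

/-- Over DB₀, Coll_s(Σ_{n+1}) is deductively equivalent to
Coll(Σ_{n+1}) + Sep(Σ_{n+1}): a model of DB₀ satisfies all instances of
Coll_s(Σ_{n+1}) iff it satisfies all instances of Coll(Σ_{n+1}) and all
instances of Sep(Σ_{n+1}). -/
theorem collS_iff_coll_and_sep (n : ℕ) (M : Type) (E : M → M → Prop)
    (hM : SatDB0 E) :
    CollSScheme E (IsSigma (n + 1)) ↔
      CollScheme E (IsSigma (n + 1)) ∧ SepScheme E (IsSigma (n + 1)) := by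
  constructor
  · intro HCS
    refine ⟨collScheme_of_collS HCS, ?_⟩
    intro φ hφ hfv v p
    rcases sepD_main n M E hM HCS φ hφ 0 (fun _ => v) p with ⟨q, hq⟩
    refine ⟨q, fun x => ?_⟩
    rw [val2_eq]
    exact hq x
  · rintro ⟨h1, h2⟩
    exact collS_of_coll_sep hM h1 h2

end FOSet
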